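/- arXiv:2101.09326 — 4 statements merged into one kernel-verified Lean document; each statement's English description precedes it below -/
import Mathlib

section
/- Let X and Y be connected finite polyhedra and let f: X → D_n(Y) be an n-valued map. Then f admits a partition into irreducibles consisting of exactly k submaps f = {f_1,...,f_k} if and only if the graph Γ_f has exactly k path components; and in that case the path components of Γ_f are exactly the graphs Γ_{f_1},...,Γ_{f_k}. -/
open Function Set

/-- The ordered configuration space of `n` points in `Y`. -/
def OrdConf (n : ℕ) (Y : Type*) [TopologicalSpace Y] : Type _ :=
  {y : Fin n → Y // Function.Injective y}

instance (n : ℕ) (Y : Type*) [TopologicalSpace Y] : TopologicalSpace (OrdConf n Y) :=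
  instTopologicalSpaceSubtype

/-- Two ordered configurations are equivalent when they differ by a permutation. -/
def confSetoid (n : ℕ) (Y : Type*) [TopologicalSpace Y] : Setoid (OrdConf n Y) where
  r a b := ∃ σ : Equiv.Perm (Fin n), a.1 ∘ σ = b.1
  iseqv := by
    constructor
    · intro a; exact ⟨Equiv.refl _, rfl⟩
    · rintro a b ⟨σ, h⟩
      refine ⟨σ.symm, funext fun i => ?_⟩
      have := congrFun h (σ.symm i)
      simpa using this.symm
    · rintro a b c ⟨σ, h1⟩ ⟨τ, h2⟩
      refine ⟨τ.trans σ, funext fun i => ?_⟩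
      have h1' := congrFun h1 (τ i)
      have h2' := congrFun h2 i
      simp only [Function.comp_apply] at h1' h2' ⊢
      simp [Equiv.trans_apply, h1', h2']

/-- The unordered configuration space `D_n(Y)` of `n` points in `Y`,
with the quotient topology. -/
def UnordConf (n : ℕ) (Y : Type*) [TopologicalSpace Y] : Type _ :=
  Quotient (confSetoid n Y)

instance (n : ℕ) (Y : Type*) [TopologicalSpace Y] : TopologicalSpace (UnordConf n Y) :=
  instTopologicalSpaceQuotient

/-- The underlying `n`-element subset of `Y` determined by an unordered configuration. -/
def UnordConf.values {n : ℕ} {Y : Type*} [TopologicalSpace Y] : UnordConf n Y → Set Y :=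
  Quotient.lift (fun a => Set.range a.1) (by
    rintro a b ⟨σ, h⟩
    show Set.range a.1 = Set.range b.1
    rw [← h, Set.range_comp]
    simp)

/-- An `n`-valued map from `X` to `Y` is a continuous map `X → D_n(Y)`. -/
abbrev NValuedMap (X Y : Type*) [TopologicalSpace X] [TopologicalSpace Y] (n : ℕ) :=
  C(X, UnordConf n Y)

/-- `g` is a submap of `f` when `g(x) ⊆ f(x)` for all `x`. -/
def IsSubmap {X Y : Type*} [TopologicalSpace X] [TopologicalSpace Y] {k n : ℕ}
    (g : NValuedMap X Y k) (f : NValuedMap X Y n) : Prop :=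
  ∀ x : X, (g x).values ⊆ (f x).values

/-- An `n`-valued map is irreducible when it admits no proper (`k`-valued, `0 < k < n`) submap. -/
def IsIrreducibleNV {X Y : Type*} [TopologicalSpace X] [TopologicalSpace Y] {n : ℕ}
    (f : NValuedMap X Y n) : Prop :=
  ¬ ∃ (k : ℕ) (g : NValuedMap X Y k), 0 < k ∧ k < n ∧ IsSubmap g f

/-- A partition of an `n`-valued map `f` into `l` multimaps:
a family of `kᵢ`-valued maps with `k₁ + ⋯ + k_l = n` whose values unite to those of `f`. -/
structure NVPartition {X Y : Type*} [TopologicalSpace X] [TopologicalSpace Y] {n : ℕ}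
    (f : NValuedMap X Y n) (l : ℕ) where
  card : Fin l → ℕ
  card_pos : ∀ i, 0 < card i
  maps : ∀ i, NValuedMap X Y (card i)
  sum_card : ∑ i, card i = n
  values_eq : ∀ x : X, (f x).values = ⋃ i, UnordConf.values ((maps i) x)

/-- A partition is into irreducibles when every member is irreducible. -/
def NVPartition.IsIrreduciblePartition {X Y : Type*} [TopologicalSpace X] [TopologicalSpace Y]
    {n : ℕ} {f : NValuedMap X Y n} {l : ℕ} (P : NVPartition f l) : Prop :=
  ∀ i, IsIrreducibleNV (P.maps i)

/-- A space is a (compact) finite polyhedron when it is homeomorphic to the underlying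
space of a finite simplicial complex in some Euclidean space. -/
def IsFinitePolyhedron (X : Type*) [TopologicalSpace X] : Prop :=
  ∃ (N : ℕ) (K : Geometry.SimplicialComplex ℝ (EuclideanSpace ℝ (Fin N))),
    K.faces.Finite ∧ Nonempty (X ≃ₜ K.space)

/-- The graph of an `n`-valued map, as a subspace of `X × Y`. -/
def NVGraph {X Y : Type*} [TopologicalSpace X] [TopologicalSpace Y] {n : ℕ}
    (f : NValuedMap X Y n) : Type _ :=
  {p : X × Y // p.2 ∈ UnordConf.values (f p.1)}

instance {X Y : Type*} [TopologicalSpace X] [TopologicalSpace Y] {n : ℕ}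
    (f : NValuedMap X Y n) : TopologicalSpace (NVGraph f) :=
  instTopologicalSpaceSubtype

/-- First-coordinate projection of the graph. -/
def NVGraph.q {X Y : Type*} [TopologicalSpace X] [TopologicalSpace Y] {n : ℕ}
    {f : NValuedMap X Y n} (z : NVGraph f) : X := z.1.1

/-- Second-coordinate projection of the graph. -/
def NVGraph.F {X Y : Type*} [TopologicalSpace X] [TopologicalSpace Y] {n : ℕ}
    {f : NValuedMap X Y n} (z : NVGraph f) : Y := z.1.2

section ConfLemmas

variable {Y : Type*} [TopologicalSpace Y] {m : ℕ}

@[simp] lemma UnordConf.values_mk (a : OrdConf m Y) :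
    UnordConf.values (Quotient.mk (confSetoid m Y) a) = Set.range a.1 := rfl

lemma UnordConf.values_injective :
    Function.Injective (UnordConf.values : UnordConf m Y → Set Y) := by
  intro c d h
  induction c using Quotient.ind
  induction d using Quotient.ind
  rename_i a b
  simp only [UnordConf.values_mk] at h
  refine Quotient.sound ?_
  have hb : ∀ j, b.1 j ∈ Set.range a.1 := fun j => h ▸ Set.mem_range_self j
  have ha : ∀ j, a.1 j ∈ Set.range b.1 := fun j => h ▸ Set.mem_range_self j
  let A := Equiv.ofInjective a.1 a.2
  let B := Equiv.ofInjective b.1 b.2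
  refine ⟨B.trans ((Equiv.setCongr h.symm).trans A.symm), funext fun j => ?_⟩
  show a.1 (A.symm (Equiv.setCongr h.symm (B j))) = b.1 j
  rw [Equiv.apply_ofInjective_symm a.2]
  rfl

lemma UnordConf.values_finite (c : UnordConf m Y) : c.values.Finite := by
  induction c using Quotient.ind
  exact Set.finite_range _

lemma UnordConf.ncard_values (c : UnordConf m Y) : c.values.ncard = m := by
  induction c using Quotient.ind
  rename_i a
  rw [show UnordConf.values (Quotient.mk (confSetoid m Y) a) = Set.range a.1 from rfl,
    ← Nat.card_coe_set_eq, Nat.card_range_of_injective a.2, Nat.card_eq_fintype_card,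
    Fintype.card_fin]

/-- Separation of finitely many distinct points by pairwise disjoint open sets. -/
lemma exists_disjoint_opens [T2Space Y] (y : Fin m → Y) (hy : Function.Injective y) :
    ∃ U : Fin m → Set Y, (∀ i, IsOpen (U i)) ∧ (∀ i, y i ∈ U i) ∧
      Pairwise fun i j => Disjoint (U i) (U j) := by
  have h : ∀ i j : Fin m, ∃ uv : Set Y × Set Y, IsOpen uv.1 ∧ IsOpen uv.2 ∧ y i ∈ uv.1 ∧
      y j ∈ uv.2 ∧ (i ≠ j → Disjoint uv.1 uv.2) := by
    intro i j
    rcases eq_or_ne i j with rfl | hij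
    · exact ⟨⟨Set.univ, Set.univ⟩, isOpen_univ, isOpen_univ, Set.mem_univ _, Set.mem_univ _,
        fun h => absurd rfl h⟩
    · obtain ⟨u, v, hu, hv, hyu, hyv, huv⟩ := t2_separation (hy.ne hij)
      exact ⟨⟨u, v⟩, hu, hv, hyu, hyv, fun _ => huv⟩
  choose s hs1 hs2 hs3 hs4 hs5 using h
  refine ⟨fun i => ⋂ j, ((s i j).1 ∩ (s j i).2), fun i => ?_, fun i => ?_, fun i j hij => ?_⟩
  · exact isOpen_iInter_of_finite fun j => ((hs1 i j).inter (hs2 j i))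
  · exact Set.mem_iInter.2 fun j => ⟨hs3 i j, hs4 j i⟩
  · refine Set.disjoint_left.2 fun z hz hz' => ?_
    have h1 : z ∈ (s i j).1 := (Set.mem_iInter.1 hz j).1
    have h2 : z ∈ (s i j).2 := (Set.mem_iInter.1 hz' i).2
    exact Set.disjoint_left.1 (hs5 i j hij) h1 h2

/-- The basic open subset of the unordered configuration space determined by a pairwise
disjoint family of open sets. -/
def basicSet (U : Fin m → Set Y) : Set (UnordConf m Y) :=
  {c | (∀ i, (c.values ∩ U i).Nonempty) ∧ c.values ⊆ ⋃ i, U i}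

lemma mem_basicSet_of_perm {U : Fin m → Set Y}
    (hd : Pairwise fun i j => Disjoint (U i) (U j)) (a : OrdConf m Y) :
    Quotient.mk (confSetoid m Y) a ∈ basicSet U ↔
      ∃ σ : Equiv.Perm (Fin m), ∀ i, a.1 (σ i) ∈ U i := by
  constructor
  · rintro ⟨h1, h2⟩
    simp only [UnordConf.values_mk] at h1 h2
    have : ∀ i : Fin m, ∃ j : Fin m, a.1 j ∈ U i := by
      intro i
      obtain ⟨y, hy1, hy2⟩ := h1 i
      obtain ⟨j, rfl⟩ := hy1
      exact ⟨j, hy2⟩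
    choose t ht using this
    have hinj : Function.Injective t := by
      intro i i' he
      by_contra hne
      exact Set.disjoint_left.1 (hd hne) (ht i) (he ▸ ht i')
    have hbij : Function.Bijective t := (Finite.injective_iff_bijective).1 hinj
    exact ⟨Equiv.ofBijective t hbij, fun i => ht i⟩
  · rintro ⟨σ, hσ⟩
    constructor
    · intro i
      exact ⟨a.1 (σ i), by simp [UnordConf.values_mk], hσ i⟩
    · intro y hy
      simp only [UnordConf.values_mk] at hy
      obtain ⟨j, rfl⟩ := hy
      have : a.1 (σ (σ.symm j)) ∈ U (σ.symm j) := hσ (σ.symm j)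
      simp only [Equiv.apply_symm_apply] at this
      exact Set.mem_iUnion.2 ⟨σ.symm j, this⟩

lemma isOpen_basicSet {U : Fin m → Set Y} (hU : ∀ i, IsOpen (U i))
    (hd : Pairwise fun i j => Disjoint (U i) (U j)) : IsOpen (basicSet U) := by
  rw [show basicSet U = _ from rfl]
  have : IsOpen ((Quotient.mk (confSetoid m Y)) ⁻¹' basicSet U) := by
    have he : (Quotient.mk (confSetoid m Y)) ⁻¹' basicSet U =
        ⋃ σ : Equiv.Perm (Fin m), {a : OrdConf m Y | ∀ i, a.1 (σ i) ∈ U i} := by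
      ext a
      simp only [Set.mem_preimage, Set.mem_iUnion, Set.mem_setOf_eq]
      exact mem_basicSet_of_perm hd a
    rw [he]
    refine isOpen_iUnion fun σ => ?_
    have : {a : OrdConf m Y | ∀ i, a.1 (σ i) ∈ U i} =
        ⋂ i, (fun a : OrdConf m Y => a.1 (σ i)) ⁻¹' (U i) := by
      ext a; simp
    rw [this]
    refine isOpen_iInter_of_finite fun i => ?_
    exact ((hU i).preimage ((continuous_apply (σ i)).comp continuous_subtype_val))
  exact isQuotientMap_quotient_mk'.isOpen_preimage.1 this

end ConfLemmas
section GraphLemmas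

variable {X Y : Type*} [TopologicalSpace X] [TopologicalSpace Y] {n : ℕ} (f : NValuedMap X Y n)

/-- The fiber of a subset of the graph over a point of `X`. -/
def Fib (C : Set (NVGraph f)) (x : X) : Set Y :=
  {y | ∃ h : y ∈ UnordConf.values (f x), (⟨(x, y), h⟩ : NVGraph f) ∈ C}

lemma Fib_subset (C : Set (NVGraph f)) (x : X) : Fib f C x ⊆ UnordConf.values (f x) :=
  fun _ hy => hy.1

lemma Fib_finite (C : Set (NVGraph f)) (x : X) : (Fib f C x).Finite :=
  (UnordConf.values_finite (f x)).subset (Fib_subset f C x)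

lemma mem_Fib_iff {C : Set (NVGraph f)} {z : NVGraph f} :
    NVGraph.F z ∈ Fib f C (NVGraph.q z) ↔ z ∈ C := by
  obtain ⟨⟨x, y⟩, hz⟩ := z
  constructor
  · rintro ⟨h, hmem⟩
    exact hmem
  · intro h
    exact ⟨hz, h⟩

lemma local_structure [T2Space Y] (x₀ : X) :
    ∃ (V : Set X) (U : Fin n → Set Y) (g : Fin n → X → Y),
      IsOpen V ∧ x₀ ∈ V ∧ (∀ i, IsOpen (U i)) ∧ (Pairwise fun i j => Disjoint (U i) (U j)) ∧
      (∀ i, ContinuousOn (g i) V) ∧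
      (∀ x ∈ V, ∀ i, g i x ∈ UnordConf.values (f x) ∧ g i x ∈ U i) ∧
      (∀ x ∈ V, ∀ y ∈ UnordConf.values (f x), ∃ i, y = g i x) ∧
      (∀ x ∈ V, ∀ i, ∀ y ∈ UnordConf.values (f x), y ∈ U i → y = g i x) := by
  obtain ⟨a, ha⟩ := Quotient.exists_rep (f x₀)
  obtain ⟨U, hUo, hUm, hUd⟩ := exists_disjoint_opens a.1 a.2
  set V : Set X := f ⁻¹' basicSet U with hV
  have hVo : IsOpen V := (isOpen_basicSet hUo hUd).preimage f.continuous
  have hx₀ : x₀ ∈ V := by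
    show f x₀ ∈ basicSet U
    rw [← ha]
    refine (mem_basicSet_of_perm hUd a).2 ?_
    exact ⟨Equiv.refl _, fun i => hUm i⟩
  have hkey : ∀ x, ∀ i : Fin n, ∃ y, x ∈ V →
      ((y ∈ UnordConf.values (f x) ∧ y ∈ U i) ∧
      ∀ y', y' ∈ UnordConf.values (f x) → y' ∈ U i → y' = y) := by
    intro x i
    by_cases hx : x ∈ V
    swap
    · exact ⟨a.1 i, fun hx' => absurd hx' hx⟩
    refine ?_
    obtain ⟨b, hb⟩ := Quotient.exists_rep (f x)
    have hmem : Quotient.mk (confSetoid n Y) b ∈ basicSet U := by rw [hb]; exact hx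
    rw [mem_basicSet_of_perm hUd] at hmem
    obtain ⟨σ, hσ⟩ := hmem
    refine ⟨b.1 (σ i), fun _ => ⟨⟨by rw [← hb]; exact Set.mem_range_self _, hσ i⟩, ?_⟩⟩
    intro y' hy1 hy2
    rw [← hb] at hy1
    obtain ⟨j, rfl⟩ := hy1
    have h1 : b.1 j ∈ U (σ.symm j) := by
      have := hσ (σ.symm j)
      rwa [Equiv.apply_symm_apply] at this
    have hji : σ.symm j = i := by
      by_contra hne
      exact Set.disjoint_left.1 (hUd hne) h1 hy2
    rw [← hji, Equiv.apply_symm_apply]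
  choose gv hkey' using hkey
  have hgv : ∀ x ∈ V, ∀ i, gv x i ∈ UnordConf.values (f x) ∧ gv x i ∈ U i :=
    fun x hx i => (hkey' x i hx).1
  have hguniq : ∀ x ∈ V, ∀ (i : Fin n), ∀ y ∈ UnordConf.values (f x), y ∈ U i → y = gv x i :=
    fun x hx i y hy hyU => (hkey' x i hx).2 y hy hyU
  have hcover : ∀ x ∈ V, UnordConf.values (f x) ⊆ ⋃ j, U j := fun x hx =>
    (show f x ∈ basicSet U from hx).2
  have hsurj : ∀ x ∈ V, ∀ y ∈ UnordConf.values (f x), ∃ i, y = gv x i := by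
    intro x hx y hy
    obtain ⟨j, hj⟩ := Set.mem_iUnion.1 (hcover x hx hy)
    exact ⟨j, hguniq x hx j y hy hj⟩
  refine ⟨V, U, fun i x => gv x i, hVo, hx₀, hUo, hUd, ?_, fun x hx i => hgv x hx i,
    hsurj, hguniq⟩
  intro i
  rw [continuousOn_iff]
  intro x hx t ht hxt
  set U' : Fin n → Set Y := Function.update U i (U i ∩ t) with hU'
  have hU'sub : ∀ j, U' j ⊆ U j := by
    intro j
    rcases eq_or_ne j i with rfl | hne
    · rw [hU', Function.update_self]; exact Set.inter_subset_left
    · rw [hU', Function.update_of_ne hne]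
  have hU'o : ∀ j, IsOpen (U' j) := by
    intro j
    rcases eq_or_ne j i with rfl | hne
    · rw [hU', Function.update_self]; exact (hUo j).inter ht
    · rw [hU', Function.update_of_ne hne]; exact hUo j
  have hU'd : Pairwise fun i j => Disjoint (U' i) (U' j) := fun j j' hne =>
    (hUd hne).mono (hU'sub j) (hU'sub j')
  have hmemU' : ∀ x' ∈ V, (gv x' i ∈ t) → ∀ j, gv x' j ∈ U' j := by
    intro x' hx' hgt j
    rcases eq_or_ne j i with rfl | hne
    · rw [hU', Function.update_self]; exact ⟨(hgv x' hx' j).2, hgt⟩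
    · rw [hU', Function.update_of_ne hne]; exact (hgv x' hx' j).2
  refine ⟨V ∩ f ⁻¹' basicSet U',
    hVo.inter ((isOpen_basicSet hU'o hU'd).preimage f.continuous), ⟨hx, ?_⟩, ?_⟩
  · show f x ∈ basicSet U'
    constructor
    · intro j
      exact ⟨gv x j, (hgv x hx j).1, hmemU' x hx hxt j⟩
    · intro y hy
      obtain ⟨j, rfl⟩ := hsurj x hx y hy
      exact Set.mem_iUnion.2 ⟨j, hmemU' x hx hxt j⟩
  · rintro x' ⟨⟨hx'V, hx'B⟩, -⟩
    have hB : f x' ∈ basicSet U' := hx'B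
    obtain ⟨y, hy1, hy2⟩ := hB.1 i
    have hyU : y ∈ U i := hU'sub i hy2
    have : y = gv x' i := hguniq x' hx'V i y hy1 hyU
    have hyt : y ∈ t := by
      have := hy2
      rw [hU', Function.update_self] at this
      exact this.2
    show gv x' i ∈ t
    rwa [this] at hyt

end GraphLemmas
section GraphLemmas2

variable {X Y : Type*} [TopologicalSpace X] [TopologicalSpace Y] {n : ℕ} (f : NValuedMap X Y n)

lemma exists_joined_nbhd [T2Space Y] [LocallyPathConnectedSpace X] (z : NVGraph f) :
    ∃ S : Set (NVGraph f), IsOpen S ∧ z ∈ S ∧ ∀ w ∈ S, Joined z w := by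
  obtain ⟨V, U, g, hVo, hzV, hUo, hUd, hgc, hgm, hsurj, huniq⟩ := local_structure f z.q
  obtain ⟨i, hi⟩ := hsurj z.q hzV z.F z.2
  obtain ⟨u, ⟨huo, hzu, hupc⟩, huV⟩ :=
    (isOpen_isPathConnected_basis (NVGraph.q z)).mem_iff.1 (hVo.mem_nhds hzV)
  refine ⟨{w : NVGraph f | NVGraph.q w ∈ u ∧ NVGraph.F w ∈ U i}, ?_, ⟨hzu, ?_⟩, ?_⟩
  · have : {w : NVGraph f | NVGraph.q w ∈ u ∧ NVGraph.F w ∈ U i} =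
        Subtype.val ⁻¹' (u ×ˢ U i) := rfl
    rw [this]
    exact (huo.prod (hUo i)).preimage continuous_subtype_val
  · rw [hi]; exact (hgm z.q hzV i).2
  · rintro w ⟨hwu, hwU⟩
    have hw : NVGraph.F w = g i (NVGraph.q w) :=
      huniq (NVGraph.q w) (huV hwu) i (NVGraph.F w) w.2 hwU
    obtain ⟨γ, hγu⟩ := hupc.joinedIn z.q hzu (NVGraph.q w) hwu
    have hγV : ∀ t, γ t ∈ V := fun t => huV (hγu t)
    have hcont : Continuous fun t : unitInterval => g i (γ t) :=
      (hgc i).comp_continuous γ.continuous hγV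
    refine ⟨⟨⟨fun t => ⟨(γ t, g i (γ t)), (hgm (γ t) (hγV t) i).1⟩, ?_⟩, ?_, ?_⟩⟩
    · exact (Continuous.prodMk γ.continuous hcont).subtype_mk _
    · apply Subtype.ext
      show (γ 0, g i (γ 0)) = z.val
      rw [γ.source, ← hi]
      rfl
    · apply Subtype.ext
      show (γ 1, g i (γ 1)) = w.val
      rw [γ.target, ← hw]
      rfl

lemma isClopen_pathComponent_graph [T2Space Y] [LocallyPathConnectedSpace X] (z : NVGraph f) :
    IsClopen (pathComponent z) := by
  constructor
  · rw [← isOpen_compl_iff, isOpen_iff_mem_nhds]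
    intro z' hz'
    obtain ⟨S, hSo, hzS, hS⟩ := exists_joined_nbhd f z'
    refine Filter.mem_of_superset (hSo.mem_nhds hzS) fun w hw hwmem => ?_
    exact hz' ((hwmem.trans (hS w hw).symm : Joined z z'))
  · rw [isOpen_iff_mem_nhds]
    intro z' hz'
    obtain ⟨S, hSo, hzS, hS⟩ := exists_joined_nbhd f z'
    exact Filter.mem_of_superset (hSo.mem_nhds hzS) fun w hw => hz'.trans (hS w hw)

lemma local_fiber_structure [T2Space Y] [LocallyPathConnectedSpace X] (C : Set (NVGraph f))
    (hC : IsClopen C) (x₀ : X) :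
    ∃ (u : Set X) (T : Set (Fin n)) (g : Fin n → X → Y),
      IsOpen u ∧ x₀ ∈ u ∧ (∀ i, ContinuousOn (g i) u) ∧
      (∀ x ∈ u, Function.Injective fun i => g i x) ∧
      (∀ x ∈ u, ∀ i, g i x ∈ UnordConf.values (f x)) ∧
      (∀ x ∈ u, Fib f C x = (fun i => g i x) '' T) := by
  obtain ⟨V, U, g, hVo, hzV, hUo, hUd, hgc, hgm, hsurj, huniq⟩ := local_structure f x₀
  obtain ⟨u, ⟨huo, hzu, hupc⟩, huV⟩ :=
    (isOpen_isPathConnected_basis x₀).mem_iff.1 (hVo.mem_nhds hzV)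
  have hval : ∀ x ∈ u, ∀ i, g i x ∈ UnordConf.values (f x) :=
    fun x hx i => (hgm x (huV hx) i).1
  have hinj : ∀ x ∈ u, Function.Injective fun i => g i x := by
    intro x hx i j hij
    change g i x = g j x at hij
    by_contra hne
    refine Set.disjoint_left.1 (hUd hne) ((hgm x (huV hx) i).2) ?_
    rw [hij]
    exact (hgm x (huV hx) j).2
  have hdich : ∀ i : Fin n,
      (∀ x (hx : x ∈ u), (⟨(x, g i x), hval x hx i⟩ : NVGraph f) ∈ C) ∨
      (∀ x (hx : x ∈ u), (⟨(x, g i x), hval x hx i⟩ : NVGraph f) ∉ C) := by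
    intro i
    haveI : PathConnectedSpace u := isPathConnected_iff_pathConnectedSpace.1 hupc
    set ψ : u → NVGraph f := fun x => ⟨(x.1, g i x.1), hval x.1 x.2 i⟩ with hψ
    have hψc : Continuous ψ := by
      refine Continuous.subtype_mk ?_ _
      exact continuous_subtype_val.prodMk ((hgc i).mono huV).restrict
    have hpre : IsPreconnected (Set.range ψ) := isPreconnected_range hψc
    rcases (Set.range ψ ∩ C).eq_empty_or_nonempty with hemp | hne
    · refine Or.inr fun x hx hmem => ?_
      have : ψ ⟨x, hx⟩ ∈ Set.range ψ ∩ C := ⟨Set.mem_range_self _, hmem⟩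
      rw [hemp] at this
      exact this
    · refine Or.inl fun x hx => ?_
      have hsub : Set.range ψ ⊆ C := hpre.subset_isClopen hC
        (by obtain ⟨w, hw1, hw2⟩ := hne; exact ⟨w, hw1, hw2⟩)
      exact hsub (Set.mem_range_self (⟨x, hx⟩ : u))
  set T : Set (Fin n) := {i | (⟨(x₀, g i x₀), hval x₀ hzu i⟩ : NVGraph f) ∈ C} with hT
  refine ⟨u, T, g, huo, hzu, fun i => (hgc i).mono huV, hinj, hval, ?_⟩
  intro x hx
  ext y
  constructor
  · rintro ⟨hy, hyC⟩
    obtain ⟨i, rfl⟩ := hsurj x (huV hx) y hy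
    refine ⟨i, ?_, rfl⟩
    have hiC : (⟨(x, g i x), hval x hx i⟩ : NVGraph f) ∈ C := hyC
    rcases hdich i with hall | hnone
    · exact hall x₀ hzu
    · exact absurd hiC (hnone x hx)
  · rintro ⟨i, hiT, rfl⟩
    refine ⟨hval x hx i, ?_⟩
    rcases hdich i with hall | hnone
    · exact hall x hx
    · exact absurd hiT (hnone x₀ hzu)

lemma cnt_const [T2Space Y] [LocallyPathConnectedSpace X] [PreconnectedSpace X]
    {C : Set (NVGraph f)} (hC : IsClopen C) (x x' : X) :
    (Fib f C x).ncard = (Fib f C x').ncard := by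
  have hlc : IsLocallyConstant fun x => (Fib f C x).ncard := by
    rw [IsLocallyConstant.iff_exists_open]
    intro x₀
    obtain ⟨u, T, g, huo, hzu, hgc, hinj, hval, hFib⟩ := local_fiber_structure f C hC x₀
    refine ⟨u, huo, hzu, fun x hx => ?_⟩
    rw [hFib x hx, hFib x₀ hzu,
      Set.ncard_image_of_injective _ (hinj x hx),
      Set.ncard_image_of_injective _ (hinj x₀ hzu)]
  exact hlc.apply_eq_of_preconnectedSpace x x'

end GraphLemmas2
section GraphLemmas3

variable {X Y : Type*} [TopologicalSpace X] [TopologicalSpace Y] {n : ℕ} (f : NValuedMap X Y n)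

/-- A clopen subset of the graph with constant fiber cardinality `k` is the graph of a
`k`-valued submap. -/
lemma exists_submap_of_clopen [T2Space Y] [LocallyPathConnectedSpace X]
    {C : Set (NVGraph f)} (hC : IsClopen C) {k : ℕ}
    (hk : ∀ x, (Fib f C x).ncard = k) :
    ∃ g : NValuedMap X Y k, ∀ x, UnordConf.values (g x) = Fib f C x := by
  classical
  -- pointwise enumeration of the fiber
  have henum : ∀ x : X, ∃ v : Fin k → Y, Function.Injective v ∧ Set.range v = Fib f C x := by
    intro x
    have hfin : (Fib f C x).Finite := Fib_finite f C x
    haveI := hfin.to_subtype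
    have hcard : Nat.card (Fib f C x) = k := by
      rw [Nat.card_coe_set_eq, hk]
    let e : Fib f C x ≃ Fin k := Finite.equivFinOfCardEq hcard
    refine ⟨fun j => (e.symm j).1, ?_, ?_⟩
    · intro j j' hjj'
      have := Subtype.ext hjj' (p := fun y => y ∈ Fib f C x)
      exact e.symm.injective (Subtype.ext hjj')
    · ext y
      constructor
      · rintro ⟨j, rfl⟩
        exact (e.symm j).2
      · intro hy
        exact ⟨e ⟨y, hy⟩, by simp⟩
  choose v hvinj hvrange using henum
  set F : X → UnordConf k Y := fun x => Quotient.mk (confSetoid k Y) ⟨v x, hvinj x⟩ with hF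
  have hFval : ∀ x, UnordConf.values (F x) = Fib f C x := by
    intro x
    rw [hF]
    exact hvrange x
  -- continuity
  have hFc : Continuous F := by
    rw [continuous_def]
    intro O hO
    rw [isOpen_iff_mem_nhds]
    intro x₀ hx₀O
    obtain ⟨u, T, g, huo, hzu, hgc, hinj, hval, hFib⟩ := local_fiber_structure f C hC x₀
    have hTfin : T.Finite := Set.toFinite T
    haveI := hTfin.to_subtype
    have hTcard : Nat.card T = k := by
      have h1 := hk x₀
      rw [hFib x₀ hzu, Set.ncard_image_of_injective _ (hinj x₀ hzu)] at h1
      rw [Nat.card_coe_set_eq]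
      exact h1
    let eT : Fin k ≃ T := (Finite.equivFinOfCardEq hTcard).symm
    -- the local lift on the subtype u
    have hWinj : ∀ x : u, Function.Injective fun j : Fin k => g (eT j).1 x.1 := by
      intro x j j' h
      change g (eT j).1 x.1 = g (eT j').1 x.1 at h
      have := hinj x.1 x.2 h
      exact eT.injective (Subtype.ext this)
    set W : u → OrdConf k Y := fun x => ⟨fun j => g (eT j).1 x.1, hWinj x⟩ with hW
    have hWc : Continuous W := by
      refine Continuous.subtype_mk ?_ _
      refine continuous_pi fun j => ?_
      exact ((hgc (eT j).1).mono (le_refl _)).restrict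
    have hWF : ∀ x : u, Quotient.mk (confSetoid k Y) (W x) = F x.1 := by
      intro x
      apply UnordConf.values_injective
      rw [hFval x.1]
      show Set.range (fun j => g (eT j).1 x.1) = Fib f C x.1
      rw [hFib x.1 x.2]
      ext y
      constructor
      · rintro ⟨j, rfl⟩
        exact ⟨(eT j).1, (eT j).2, rfl⟩
      · rintro ⟨i, hiT, rfl⟩
        exact ⟨eT.symm ⟨i, hiT⟩, by simp⟩
    set Φ : u → UnordConf k Y := fun x => Quotient.mk (confSetoid k Y) (W x) with hΦ
    have hΦc : Continuous Φ := continuous_quotient_mk'.comp hWc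
    have : IsOpen (Φ ⁻¹' O) := hΦc.isOpen_preimage O hO
    rw [isOpen_induced_iff] at this
    obtain ⟨O', hO'o, hO'eq⟩ := this
    have hx₀mem : (⟨x₀, hzu⟩ : u) ∈ Φ ⁻¹' O := by
      show Φ ⟨x₀, hzu⟩ ∈ O
      rw [hΦ]
      show Quotient.mk (confSetoid k Y) (W ⟨x₀, hzu⟩) ∈ O
      rw [hWF ⟨x₀, hzu⟩]
      exact hx₀O
    rw [← hO'eq] at hx₀mem
    refine Filter.mem_of_superset (((hO'o.inter huo)).mem_nhds ⟨hx₀mem, hzu⟩) ?_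
    rintro x ⟨hxO', hxu⟩
    have : (⟨x, hxu⟩ : u) ∈ Φ ⁻¹' O := by rw [← hO'eq]; exact hxO'
    have := this
    rw [hΦ] at this
    show F x ∈ O
    rw [← hWF ⟨x, hxu⟩]
    exact this
  exact ⟨⟨F, hFc⟩, hFval⟩

/-- The graph of a submap is clopen in the graph of the ambient map. -/
lemma isClopen_submapGraph [T2Space Y] {m : ℕ} (g : NValuedMap X Y m) (hsub : IsSubmap g f) :
    IsClopen {z : NVGraph f | NVGraph.F z ∈ UnordConf.values (g (NVGraph.q z))} := by
  set S := {z : NVGraph f | NVGraph.F z ∈ UnordConf.values (g (NVGraph.q z))} with hS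
  have key : ∀ z₀ : NVGraph f, ∃ N : Set (NVGraph f), IsOpen N ∧ z₀ ∈ N ∧
      ∀ z ∈ N, (z ∈ S ↔ z₀ ∈ S) := by
    intro z₀
    set x₀ := NVGraph.q z₀ with hx₀
    obtain ⟨V, U, gb, hVo, hzV, hUo, hUd, hgc, hgm, hsurj, huniq⟩ := local_structure f x₀
    -- choose the branch of z₀
    obtain ⟨i₀, hi₀⟩ := hsurj x₀ hzV (NVGraph.F z₀) z₀.2
    -- the representative of g x₀
    obtain ⟨b, hb⟩ := Quotient.exists_rep (g x₀)
    -- each point of g x₀ is a branch point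
    have hbmem : ∀ j : Fin m, b.1 j ∈ UnordConf.values (f x₀) := by
      intro j
      apply hsub x₀
      rw [← hb]
      exact Set.mem_range_self _
    have hbU : ∀ j : Fin m, ∃ i : Fin n, b.1 j ∈ U i := by
      intro j
      obtain ⟨i, hi⟩ := hsurj x₀ hzV (b.1 j) (hbmem j)
      exact ⟨i, by rw [hi]; exact (hgm x₀ hzV i).2⟩
    choose τ hτ using hbU
    have hτinj : Function.Injective τ := by
      intro j j' hjj'
      have h1 : b.1 j = gb (τ j) x₀ := huniq x₀ hzV (τ j) (b.1 j) (hbmem j) (hτ j)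
      have h2 : b.1 j' = gb (τ j') x₀ := huniq x₀ hzV (τ j') (b.1 j') (hbmem j') (hτ j')
      apply b.2
      rw [h1, h2, hjj']
    -- the open set where g is controlled
    set W : Set X := V ∩ g ⁻¹' basicSet (fun j => U (τ j)) with hW
    have hWo : IsOpen W := hVo.inter
      ((isOpen_basicSet (fun j => hUo (τ j)) (fun j j' hne => hUd (fun h => hne (hτinj h)))).preimage
        g.continuous)
    have hx₀W : x₀ ∈ W := by
      refine ⟨hzV, ?_⟩
      show g x₀ ∈ basicSet _
      rw [← hb]
      refine (mem_basicSet_of_perm (fun j j' hne => hUd (fun h => hne (hτinj h))) b).2 ?_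
      exact ⟨Equiv.refl _, fun j => hτ j⟩
    -- key claim: on W, the branches in g are exactly those indexed by range τ
    have hclaim : ∀ x ∈ W, ∀ i : Fin n, (gb i x ∈ UnordConf.values (g x)) ↔ i ∈ Set.range τ := by
      rintro x ⟨hxV, hxB⟩ i
      have hxB' : g x ∈ basicSet (fun j => U (τ j)) := hxB
      constructor
      · intro hmem
        have h1 : gb i x ∈ ⋃ j, U (τ j) := hxB'.2 hmem
        obtain ⟨j, hj⟩ := Set.mem_iUnion.1 h1
        have h2 : gb i x ∈ U i := (hgm x hxV i).2
        have h3 : gb i x ∈ UnordConf.values (f x) := (hgm x hxV i).1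
        have h4 : gb i x = gb (τ j) x := huniq x hxV (τ j) (gb i x) h3 hj
        have : i = τ j := by
          by_contra hne
          have := (hgm x hxV (τ j)).2
          exact Set.disjoint_left.1 (hUd hne) h2 (by rw [h4]; exact this)
        exact ⟨j, this.symm⟩
      · rintro ⟨j, rfl⟩
        obtain ⟨y, hy1, hy2⟩ := hxB'.1 j
        have hyf : y ∈ UnordConf.values (f x) := hsub x hy1
        have : y = gb (τ j) x := huniq x hxV (τ j) y hyf hy2
        rwa [this] at hy1
    -- the neighborhood
    refine ⟨{z : NVGraph f | NVGraph.q z ∈ W ∧ NVGraph.F z ∈ U i₀}, ?_, ⟨hx₀W, ?_⟩, ?_⟩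
    · have : {z : NVGraph f | NVGraph.q z ∈ W ∧ NVGraph.F z ∈ U i₀} =
          Subtype.val ⁻¹' (W ×ˢ U i₀) := rfl
      rw [this]
      exact (hWo.prod (hUo i₀)).preimage continuous_subtype_val
    · rw [hi₀]
      exact (hgm x₀ hzV i₀).2
    · rintro z ⟨hzW, hzU⟩
      have hzB : NVGraph.F z = gb i₀ (NVGraph.q z) :=
        huniq (NVGraph.q z) hzW.1 i₀ (NVGraph.F z) z.2 hzU
      have h1 : z ∈ S ↔ i₀ ∈ Set.range τ := by
        rw [hS]
        show NVGraph.F z ∈ UnordConf.values (g (NVGraph.q z)) ↔ _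
        rw [hzB]
        exact hclaim (NVGraph.q z) hzW i₀
      have h2 : z₀ ∈ S ↔ i₀ ∈ Set.range τ := by
        rw [hS]
        show NVGraph.F z₀ ∈ UnordConf.values (g (NVGraph.q z₀)) ↔ _
        rw [hi₀]
        exact hclaim x₀ hx₀W i₀
      rw [h1, h2]
  constructor
  · rw [← isOpen_compl_iff, isOpen_iff_mem_nhds]
    intro z hz
    obtain ⟨N, hNo, hzN, hN⟩ := key z
    exact Filter.mem_of_superset (hNo.mem_nhds hzN) fun w hw hwS => hz ((hN w hw).1 hwS)
  · rw [isOpen_iff_mem_nhds]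
    intro z hz
    obtain ⟨N, hNo, hzN, hN⟩ := key z
    exact Filter.mem_of_superset (hNo.mem_nhds hzN) fun w hw => (hN w hw).2 hz

/-- The fiber of the graph of a submap. -/
lemma Fib_submapGraph [T2Space Y] {m : ℕ} (g : NValuedMap X Y m) (hsub : IsSubmap g f) (x : X) :
    Fib f {z : NVGraph f | NVGraph.F z ∈ UnordConf.values (g (NVGraph.q z))} x
      = UnordConf.values (g x) := by
  ext y
  constructor
  · rintro ⟨h, hmem⟩
    exact hmem
  · intro hy
    exact ⟨hsub x hy, hy⟩

end GraphLemmas3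
section Polyhedron

lemma IsFinitePolyhedron.t2Space {Z : Type*} [TopologicalSpace Z] (hZ : IsFinitePolyhedron Z) :
    T2Space Z := by
  obtain ⟨N, K, hfin, ⟨e⟩⟩ := hZ
  exact e.isEmbedding.t2Space

/-- A finite union of closed convex sets in a normed real vector space is locally
path-connected. -/
lemma locPathConnected_sUnion_convex {E : Type*} [NormedAddCommGroup E] [NormedSpace ℝ E]
    (𝒞 : Set (Set E)) (hfin : 𝒞.Finite) (hconv : ∀ c ∈ 𝒞, Convex ℝ c)
    (hcl : ∀ c ∈ 𝒞, IsClosed c) : LocallyPathConnectedSpace ↥(⋃₀ 𝒞) := by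
  set A := ⋃₀ 𝒞 with hA
  refine LocallyPathConnectedSpace.of_bases
    (p := fun (x : A) (ε : ℝ) =>
      0 < ε ∧ IsPathConnected (Subtype.val ⁻¹' Metric.ball x.1 ε : Set A))
    (s := fun x ε => Subtype.val ⁻¹' Metric.ball x.1 ε) ?_ (fun x ε hp => hp.2)
  intro x
  rw [Filter.hasBasis_iff]
  intro t
  constructor
  · intro ht
    obtain ⟨t', ht', hsub⟩ := (mem_nhds_subtype A x t).1 ht
    obtain ⟨δ₁, hδ₁, hball₁⟩ := Metric.mem_nhds_iff.1 ht'
    set Bad : Set E := ⋃₀ {c ∈ 𝒞 | x.1 ∉ c} with hBad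
    have hBadcl : IsClosed Bad := by
      rw [hBad, Set.sUnion_eq_biUnion]
      exact Set.Finite.isClosed_biUnion (hfin.subset fun c hc => hc.1)
        (fun c hc => hcl c hc.1)
    have hxBad : x.1 ∉ Bad := by
      rw [hBad]
      rintro ⟨c, ⟨hc1, hc2⟩, hc3⟩
      exact hc2 hc3
    obtain ⟨δ₂, hδ₂, hball₂⟩ := Metric.isOpen_iff.1 hBadcl.isOpen_compl x.1 hxBad
    set ε := min δ₁ δ₂ with hε
    have hεpos : 0 < ε := lt_min hδ₁ hδ₂
    have hpc : IsPathConnected (Subtype.val ⁻¹' Metric.ball x.1 ε : Set A) := by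
      rw [Topology.IsInducing.subtypeVal.isPathConnected_iff, Subtype.image_preimage_coe]
      refine ⟨x.1, ⟨x.2, Metric.mem_ball_self hεpos⟩, ?_⟩
      rintro y ⟨hyA, hyball⟩
      obtain ⟨c, hc𝒞, hyc⟩ := hyA
      have hxc : x.1 ∈ c := by
        by_contra hxc
        have : y ∈ Bad := ⟨c, ⟨hc𝒞, hxc⟩, hyc⟩
        have hyB : y ∈ Metric.ball x.1 δ₂ :=
          Metric.ball_subset_ball (min_le_right _ _) hyball
        exact hball₂ hyB this
      refine JoinedIn.of_segment_subset ?_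
      intro w hw
      constructor
      · exact ⟨c, hc𝒞, (hconv c hc𝒞).segment_subset hxc hyc hw⟩
      · exact (convex_ball x.1 ε).segment_subset (Metric.mem_ball_self hεpos) hyball hw
    refine ⟨ε, ⟨hεpos, hpc⟩, ?_⟩
    intro w hw
    apply hsub
    exact hball₁ (Metric.ball_subset_ball (min_le_left _ _) hw)
  · rintro ⟨ε, ⟨hεpos, -⟩, hsub⟩
    refine Filter.mem_of_superset ?_ hsub
    have : IsOpen (Subtype.val ⁻¹' Metric.ball x.1 ε : Set A) :=
      Metric.isOpen_ball.preimage continuous_subtype_val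
    exact this.mem_nhds (by exact Metric.mem_ball_self hεpos)

lemma IsFinitePolyhedron.locPathConnectedSpace {Z : Type*} [TopologicalSpace Z]
    (hZ : IsFinitePolyhedron Z) : LocallyPathConnectedSpace Z := by
  obtain ⟨N, K, hfin, ⟨e⟩⟩ := hZ
  have hspace : K.space = ⋃₀ ((fun s : Finset (EuclideanSpace ℝ (Fin N)) =>
      convexHull ℝ (s : Set (EuclideanSpace ℝ (Fin N)))) '' K.faces) := by
    rw [Set.sUnion_image]
    rfl
  have h1 : LocallyPathConnectedSpace ↥(⋃₀ ((fun s : Finset (EuclideanSpace ℝ (Fin N)) =>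
      convexHull ℝ (s : Set (EuclideanSpace ℝ (Fin N)))) '' K.faces)) := by
    refine locPathConnected_sUnion_convex _ (hfin.image _) ?_ ?_
    · rintro c ⟨s, hs, rfl⟩
      exact convex_convexHull ℝ _
    · rintro c ⟨s, hs, rfl⟩
      exact (s.finite_toSet.isCompact_convexHull ℝ).isClosed
  have h2 : LocallyPathConnectedSpace ↥K.space := by
    rw [hspace]
    exact h1
  exact e.symm.isQuotientMap.locallyPathConnectedSpace

end Polyhedron
section Counting

variable {β α : Type*}

lemma ncard_biUnion_le (s : Finset β) (A : β → Set α) :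
    (⋃ b ∈ (s : Set β), A b).ncard ≤ ∑ b ∈ s, (A b).ncard := by
  classical
  induction s using Finset.induction_on with
  | empty => simp
  | @insert a s ha ih =>
      rw [Finset.coe_insert, Set.biUnion_insert, Finset.sum_insert ha]
      exact le_trans (Set.ncard_union_le _ _) (by omega)

lemma ncard_biUnion_eq (s : Finset β) (A : β → Set α) (hA : ∀ b, (A b).Finite)
    (hdisj : ∀ b ∈ s, ∀ b' ∈ s, b ≠ b' → Disjoint (A b) (A b')) :
    (⋃ b ∈ (s : Set β), A b).ncard = ∑ b ∈ s, (A b).ncard := by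
  classical
  induction s using Finset.induction_on with
  | empty => simp
  | @insert a s ha ih =>
      rw [Finset.coe_insert, Set.biUnion_insert, Finset.sum_insert ha]
      have hdisj' : Disjoint (A a) (⋃ b ∈ (s : Set β), A b) := by
        rw [Set.disjoint_iUnion₂_right]
        intro b hb
        exact hdisj a (Finset.mem_insert_self _ _) b
          (Finset.mem_insert_of_mem hb) (fun h => ha (h ▸ hb))
      rw [Set.ncard_union_eq hdisj' (hA a) (Set.Finite.biUnion s.finite_toSet fun b _ => hA b)]
      rw [ih (fun b hb b' hb' hne => hdisj b (Finset.mem_insert_of_mem hb) b'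
        (Finset.mem_insert_of_mem hb') hne)]

end Counting
section Main

variable {X Y : Type*} [TopologicalSpace X] [TopologicalSpace Y] {n : ℕ} (f : NValuedMap X Y n)

lemma partition_submap {k : ℕ} (P : NVPartition f k) (i : Fin k) : IsSubmap (P.maps i) f := by
  intro x y hy
  rw [P.values_eq]
  exact Set.mem_iUnion.2 ⟨i, hy⟩

lemma pathComponent_eq_partition_graph [T2Space Y] [LocallyPathConnectedSpace X] [ConnectedSpace X]
    {k : ℕ} (P : NVPartition f k) (hP : P.IsIrreduciblePartition) (i : Fin k) (z : NVGraph f)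
    (hz : z ∈ {w : NVGraph f | NVGraph.F w ∈ UnordConf.values (P.maps i (NVGraph.q w))}) :
    pathComponent z = {w : NVGraph f | NVGraph.F w ∈ UnordConf.values (P.maps i (NVGraph.q w))} := by
  set G := {w : NVGraph f | NVGraph.F w ∈ UnordConf.values (P.maps i (NVGraph.q w))} with hG
  have hGclopen : IsClopen G := isClopen_submapGraph f (P.maps i) (partition_submap f P i)
  have hGfib : ∀ x, Fib f G x = UnordConf.values (P.maps i x) :=
    Fib_submapGraph f (P.maps i) (partition_submap f P i)
  set D := pathComponent z with hD
  have hDclopen : IsClopen D := isClopen_pathComponent_graph f z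
  have hsub1 : D ⊆ G := by
    refine subset_trans (pathComponent_subset_component z) ?_
    exact hGclopen.connectedComponent_subset hz
  refine Set.Subset.antisymm hsub1 ?_
  by_contra hnot
  obtain ⟨w, hwG, hwD⟩ := Set.not_subset.1 hnot
  set R := G \ D with hR
  have hRclopen : IsClopen R := hGclopen.diff hDclopen
  have hRw : w ∈ R := ⟨hwG, hwD⟩
  -- fiber counts
  have hDd : ∀ x x', (Fib f D x).ncard = (Fib f D x').ncard := fun x x' =>
    cnt_const f hDclopen x x'
  have hRd : ∀ x x', (Fib f R x).ncard = (Fib f R x').ncard := fun x x' =>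
    cnt_const f hRclopen x x'
  set d := (Fib f D (NVGraph.q z)).ncard with hd
  set r := (Fib f R (NVGraph.q w)).ncard with hr
  have hdpos : 0 < d := by
    rw [hd]
    rw [Set.ncard_pos (Fib_finite f D (NVGraph.q z))]
    exact ⟨NVGraph.F z, (mem_Fib_iff f).2 (mem_pathComponent_self z)⟩
  have hrpos : 0 < r := by
    rw [hr]
    rw [Set.ncard_pos (Fib_finite f R (NVGraph.q w))]
    exact ⟨NVGraph.F w, (mem_Fib_iff f).2 hRw⟩
  -- additivity of counts
  have hadd : ∀ x, (Fib f G x).ncard = (Fib f D x).ncard + (Fib f R x).ncard := by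
    intro x
    have hunion : Fib f G x = Fib f D x ∪ Fib f R x := by
      ext y
      constructor
      · rintro ⟨h, hmem⟩
        by_cases hD' : (⟨(x, y), h⟩ : NVGraph f) ∈ D
        · exact Or.inl ⟨h, hD'⟩
        · exact Or.inr ⟨h, hmem, hD'⟩
      · rintro (⟨h, hmem⟩ | ⟨h, hmem⟩)
        · exact ⟨h, hsub1 hmem⟩
        · exact ⟨h, hmem.1⟩
    have hdisj : Disjoint (Fib f D x) (Fib f R x) := by
      rw [Set.disjoint_left]
      rintro y ⟨h, hmem⟩ ⟨h', hmem'⟩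
      exact hmem'.2 hmem
    rw [hunion, Set.ncard_union_eq hdisj (Fib_finite f D x) (Fib_finite f R x)]
  -- the count of G is P.card i
  have hGcard : ∀ x, (Fib f G x).ncard = P.card i := by
    intro x
    rw [hGfib x, UnordConf.ncard_values]
  -- build a proper submap from D
  have hDconst : ∀ x, (Fib f D x).ncard = d := fun x => hDd x (NVGraph.q z)
  obtain ⟨gD, hgD⟩ := exists_submap_of_clopen f hDclopen hDconst
  have : d < P.card i := by
    have h1 := hGcard (NVGraph.q z)
    have h2 := hadd (NVGraph.q z)
    have h3 : (Fib f R (NVGraph.q z)).ncard = r := hRd (NVGraph.q z) (NVGraph.q w)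
    omega
  refine hP i ⟨d, gD, hdpos, this, ?_⟩
  intro x y hy
  rw [hgD x] at hy
  rw [← hGfib x]
  exact ⟨hy.1, hsub1 hy.2⟩

end Main
theorem statement_0 {X Y : Type*} [TopologicalSpace X] [TopologicalSpace Y]
    [ConnectedSpace X] [ConnectedSpace Y]
    (hX : IsFinitePolyhedron X) (hY : IsFinitePolyhedron Y)
    {n : ℕ} (f : NValuedMap X Y n) (k : ℕ) :
    ((∃ P : NVPartition f k, P.IsIrreduciblePartition) ↔
      Nat.card (ZerothHomotopy (NVGraph f)) = k) ∧
    ∀ P : NVPartition f k, P.IsIrreduciblePartition →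
      {S : Set (NVGraph f) | ∃ z, S = pathComponent z} =
        {S : Set (NVGraph f) |
          ∃ i : Fin k, S = {z | NVGraph.F z ∈ UnordConf.values (P.maps i (NVGraph.q z))}} := by
  classical
  haveI hT2 : T2Space Y := hY.t2Space
  haveI hLPC : LocallyPathConnectedSpace X := hX.locPathConnectedSpace
  obtain ⟨x₀⟩ : Nonempty X := inferInstance
  -- common facts about irreducible partitions
  have hGfacts : ∀ (P : NVPartition f k), P.IsIrreduciblePartition →
      ∀ i : Fin k, ∃ z : NVGraph f,
        z ∈ {w : NVGraph f | NVGraph.F w ∈ UnordConf.values (P.maps i (NVGraph.q w))} := by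
    intro P hP i
    have hfib : Fib f {w : NVGraph f | NVGraph.F w ∈ UnordConf.values (P.maps i (NVGraph.q w))} x₀
        = UnordConf.values (P.maps i x₀) := Fib_submapGraph f (P.maps i) (partition_submap f P i) x₀
    have hpos : (Fib f {w : NVGraph f |
        NVGraph.F w ∈ UnordConf.values (P.maps i (NVGraph.q w))} x₀).ncard ≠ 0 := by
      rw [hfib, UnordConf.ncard_values]
      exact (P.card_pos i).ne'
    obtain ⟨y, hy⟩ := Set.nonempty_of_ncard_ne_zero hpos
    obtain ⟨h, hmem⟩ := hy
    exact ⟨⟨(x₀, y), h⟩, hmem⟩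
  have hcover : ∀ (P : NVPartition f k) (z : NVGraph f), ∃ i : Fin k,
      z ∈ {w : NVGraph f | NVGraph.F w ∈ UnordConf.values (P.maps i (NVGraph.q w))} := by
    intro P z
    have := z.2
    rw [P.values_eq] at this
    obtain ⟨i, hi⟩ := Set.mem_iUnion.1 this
    exact ⟨i, hi⟩
  have hGinj : ∀ (P : NVPartition f k), ∀ i j : Fin k, i ≠ j →
      {w : NVGraph f | NVGraph.F w ∈ UnordConf.values (P.maps i (NVGraph.q w))} ≠
      {w : NVGraph f | NVGraph.F w ∈ UnordConf.values (P.maps j (NVGraph.q w))} := by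
    intro P i j hne heq
    have hvaleq : UnordConf.values (P.maps i x₀) = UnordConf.values (P.maps j x₀) := by
      have h1 := Fib_submapGraph f (P.maps i) (partition_submap f P i) x₀
      have h2 := Fib_submapGraph f (P.maps j) (partition_submap f P j) x₀
      rw [← h1, ← h2, heq]
    have hsubun : UnordConf.values (f x₀) ⊆
        ⋃ b ∈ ((Finset.univ.erase j : Finset (Fin k)) : Set (Fin k)),
          UnordConf.values (P.maps b x₀) := by
      rw [P.values_eq]
      intro y hy
      obtain ⟨l, hl⟩ := Set.mem_iUnion.1 hy
      rcases eq_or_ne l j with rfl | hlj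
      · refine Set.mem_biUnion (show i ∈ ((Finset.univ.erase l : Finset (Fin k)) : Set (Fin k))
          from by simp [hne]) ?_
        rwa [hvaleq]
      · exact Set.mem_biUnion (by simp [hlj]) hl
    have hle1 : n ≤ ∑ b ∈ Finset.univ.erase j, (UnordConf.values (P.maps b x₀)).ncard := by
      calc n = (UnordConf.values (f x₀)).ncard := (UnordConf.ncard_values _).symm
      _ ≤ (⋃ b ∈ ((Finset.univ.erase j : Finset (Fin k)) : Set (Fin k)),
            UnordConf.values (P.maps b x₀)).ncard := by
          refine Set.ncard_le_ncard hsubun ?_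
          exact Set.Finite.biUnion (Finset.univ.erase j).finite_toSet
            (fun b _ => UnordConf.values_finite _)
      _ ≤ _ := ncard_biUnion_le _ _
    have hsum : ∑ b ∈ Finset.univ.erase j, (UnordConf.values (P.maps b x₀)).ncard
        = (∑ b : Fin k, P.card b) - P.card j := by
      have : ∀ b : Fin k, (UnordConf.values (P.maps b x₀)).ncard = P.card b :=
        fun b => UnordConf.ncard_values _
      simp only [this]
      have := Finset.sum_erase_add Finset.univ P.card (Finset.mem_univ j)
      omega
    rw [hsum, P.sum_card] at hle1
    have := P.card_pos j
    have hjle : P.card j ≤ ∑ b : Fin k, P.card b := Finset.single_le_sum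
      (fun b _ => Nat.zero_le _) (Finset.mem_univ j)
    rw [P.sum_card] at hjle
    omega
  constructor
  · constructor
    · -- partition into irreducibles gives the count of path components
      rintro ⟨P, hP⟩
      choose zi hzi using hGfacts P hP
      have hcomp : ∀ i, pathComponent (zi i)
          = {w : NVGraph f | NVGraph.F w ∈ UnordConf.values (P.maps i (NVGraph.q w))} :=
        fun i => pathComponent_eq_partition_graph f P hP i (zi i) (hzi i)
      have hbij : Function.Bijective (fun i : Fin k =>
          (Quotient.mk (pathSetoid (NVGraph f)) (zi i) : ZerothHomotopy (NVGraph f))) := by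
        constructor
        · intro i j hij
          by_contra hne
          have hjoined : Joined (zi i) (zi j) := Quotient.exact hij
          have h1 : zi j ∈ pathComponent (zi i) := hjoined
          rw [hcomp i] at h1
          have h2 := pathComponent_eq_partition_graph f P hP i (zi j) h1
          have h3 := pathComponent_eq_partition_graph f P hP j (zi j) (hzi j)
          exact hGinj P i j hne (h2 ▸ h3 ▸ rfl)
        · intro c
          obtain ⟨i, hzGi⟩ := hcover P (Quotient.out c)
          refine ⟨i, ?_⟩
          have h1 := pathComponent_eq_partition_graph f P hP i (Quotient.out c) hzGi
          have h2 : zi i ∈ pathComponent (Quotient.out c) := by rw [h1]; exact hzi i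
          have hjoined : Joined (Quotient.out c) (zi i) := h2
          show Quotient.mk (pathSetoid (NVGraph f)) (zi i) = c
          rw [← Quotient.out_eq c]
          exact Quotient.sound hjoined.symm
      have := Nat.card_eq_of_bijective _ hbij
      rw [Nat.card_eq_fintype_card, Fintype.card_fin] at this
      exact this.symm
    · -- the count of path components gives a partition into irreducibles
      intro hcard
      -- finiteness of the set of path components
      set ψ : {y : Y // y ∈ UnordConf.values (f x₀)} → ZerothHomotopy (NVGraph f) :=
        fun y => Quotient.mk (pathSetoid (NVGraph f)) ⟨(x₀, y.1), y.2⟩ with hψ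
      have hψsurj : Function.Surjective ψ := by
        intro c
        have hclop := isClopen_pathComponent_graph f (Quotient.out c)
        have hpos : (Fib f (pathComponent (Quotient.out c)) x₀).ncard ≠ 0 := by
          rw [cnt_const f hclop x₀ (NVGraph.q (Quotient.out c))]
          have hne : (Fib f (pathComponent (Quotient.out c)) (NVGraph.q (Quotient.out c))).Nonempty :=
            ⟨NVGraph.F (Quotient.out c), (mem_Fib_iff f).2 (mem_pathComponent_self _)⟩
          exact ((Set.ncard_pos (Fib_finite _ _ _)).2 hne).ne'
        obtain ⟨y, hy⟩ := Set.nonempty_of_ncard_ne_zero hpos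
        obtain ⟨h, hmem⟩ := hy
        refine ⟨⟨y, h⟩, ?_⟩
        have hjoined : Joined (Quotient.out c) (⟨(x₀, y), h⟩ : NVGraph f) := hmem
        show Quotient.mk (pathSetoid (NVGraph f)) (⟨(x₀, y), h⟩ : NVGraph f) = c
        rw [← Quotient.out_eq c]
        exact Quotient.sound hjoined.symm
      haveI : Finite {y : Y // y ∈ UnordConf.values (f x₀)} :=
        (UnordConf.values_finite (f x₀)).to_subtype
      haveI hfinZ : Finite (ZerothHomotopy (NVGraph f)) := Finite.of_surjective ψ hψsurj
      set e : ZerothHomotopy (NVGraph f) ≃ Fin k := Finite.equivFinOfCardEq hcard with he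
      set zi : Fin k → NVGraph f := fun i => Quotient.out (e.symm i) with hzi
      set C : Fin k → Set (NVGraph f) := fun i => pathComponent (zi i) with hC
      have hCclopen : ∀ i, IsClopen (C i) := fun i => isClopen_pathComponent_graph f (zi i)
      set kc : Fin k → ℕ := fun i => (Fib f (C i) x₀).ncard with hkc
      have hconst : ∀ i x, (Fib f (C i) x).ncard = kc i := fun i x => cnt_const f (hCclopen i) x x₀
      choose gi hgi using fun i => exists_submap_of_clopen f (hCclopen i) (hconst i)
      have hmemC : ∀ z : NVGraph f, z ∈ C (e (Quotient.mk (pathSetoid (NVGraph f)) z)) := by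
        intro z
        show Joined (zi (e (Quotient.mk (pathSetoid (NVGraph f)) z))) z
        rw [hzi]
        simp only [Equiv.symm_apply_apply]
        exact (congrArg (fun c => Joined (Quotient.out c) z) (e.symm_apply_apply (Quotient.mk (pathSetoid (NVGraph f)) z))).mpr (@Quotient.mk_out (NVGraph f) (pathSetoid (NVGraph f)) z)
      have hdisjC : ∀ i j, i ≠ j → Disjoint (C i) (C j) := by
        intro i j hne
        rw [Set.disjoint_left]
        intro z hzi' hzj'
        have h1 : Joined (zi i) z := hzi'
        have h2 : Joined (zi j) z := hzj'
        have : (Quotient.mk (pathSetoid (NVGraph f)) (zi i) : ZerothHomotopy (NVGraph f))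
            = Quotient.mk (pathSetoid (NVGraph f)) (zi j) :=
          Quotient.sound (h1.trans h2.symm)
        rw [hzi] at this
        simp only [Quotient.out_eq] at this
        exact hne (e.symm.injective ((Quotient.out_eq _).symm.trans (this.trans (Quotient.out_eq _))))
      have hvalues : ∀ x, UnordConf.values (f x) = ⋃ i, UnordConf.values (gi i x) := by
        intro x
        ext y
        constructor
        · intro hy
          set z : NVGraph f := ⟨(x, y), hy⟩ with hz
          refine Set.mem_iUnion.2 ⟨e (Quotient.mk (pathSetoid (NVGraph f)) z), ?_⟩
          rw [hgi]
          exact ⟨hy, hmemC z⟩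
        · intro hy
          obtain ⟨i, hi⟩ := Set.mem_iUnion.1 hy
          rw [hgi] at hi
          exact hi.1
      have hFibC : ∀ i x, Fib f (C i) x = UnordConf.values (gi i x) := fun i x => (hgi i x).symm
      have hpos : ∀ i, 0 < kc i := by
        intro i
        rw [← hconst i (NVGraph.q (zi i))]
        rw [Set.ncard_pos (Fib_finite f (C i) (NVGraph.q (zi i)))]
        exact ⟨NVGraph.F (zi i), (mem_Fib_iff f).2 (mem_pathComponent_self (zi i))⟩
      have hsum : ∑ i, kc i = n := by
        have h1 : UnordConf.values (f x₀) =
            ⋃ b ∈ ((Finset.univ : Finset (Fin k)) : Set (Fin k)), Fib f (C b) x₀ := by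
          rw [hvalues x₀]
          simp only [Finset.coe_univ, Set.mem_univ, Set.iUnion_true, hFibC]
        have hFibdisj : ∀ b ∈ (Finset.univ : Finset (Fin k)), ∀ b' ∈ (Finset.univ : Finset (Fin k)),
            b ≠ b' → Disjoint (Fib f (C b) x₀) (Fib f (C b') x₀) := by
          intro b _ b' _ hbb'
          refine Set.disjoint_left.2 ?_
          rintro y ⟨h, hmem⟩ ⟨h', hmem'⟩
          exact Set.disjoint_left.1 (hdisjC b b' hbb') hmem hmem'
        have h2 := ncard_biUnion_eq (Finset.univ : Finset (Fin k)) (fun b => Fib f (C b) x₀)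
          (fun b => Fib_finite f (C b) x₀) hFibdisj
        rw [← UnordConf.ncard_values (f x₀), h1, h2]
      refine ⟨⟨kc, hpos, gi, hsum, hvalues⟩, ?_⟩
      rintro i ⟨m, h, hmpos, hmlt, hsubm⟩
      have hsubf : IsSubmap h f := by
        intro x y hy
        have h1 : y ∈ UnordConf.values (gi i x) := hsubm x hy
        rw [hgi i x] at h1
        exact (Fib_subset f (C i) x) h1
      set D := {z : NVGraph f | NVGraph.F z ∈ UnordConf.values (h (NVGraph.q z))} with hD
      have hDclopen : IsClopen D := isClopen_submapGraph f h hsubf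
      have hDfib : ∀ x, Fib f D x = UnordConf.values (h x) := Fib_submapGraph f h hsubf
      have hDsubC : D ⊆ C i := by
        intro z hz
        have h1 : NVGraph.F z ∈ UnordConf.values (gi i (NVGraph.q z)) := hsubm _ hz
        rw [hgi] at h1
        exact (mem_Fib_iff f).1 h1
      have hDne : (C i ∩ D).Nonempty := by
        have hpos' : (Fib f D x₀).ncard ≠ 0 := by
          rw [hDfib, UnordConf.ncard_values]
          omega
        obtain ⟨y, hy⟩ := Set.nonempty_of_ncard_ne_zero hpos'
        obtain ⟨hyv, hymem⟩ := hy
        exact ⟨⟨(x₀, y), hyv⟩, hDsubC hymem, hymem⟩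
      have hCD : C i ⊆ D :=
        (isPathConnected_pathComponent).isConnected.isPreconnected.subset_isClopen hDclopen hDne
      have hDC : D = C i := Set.Subset.antisymm hDsubC hCD
      have hmki : m = kc i := by
        rw [← hconst i x₀, ← hDC, hDfib, UnordConf.ncard_values]
      have hmlt' : m < kc i := hmlt
      omega
  · -- the path components are exactly the graphs of the partition members
    intro P hP
    ext S
    constructor
    · rintro ⟨z, rfl⟩
      obtain ⟨i, hz⟩ := hcover P z
      exact ⟨i, pathComponent_eq_partition_graph f P hP i z hz⟩
    · rintro ⟨i, rfl⟩
      obtain ⟨z, hz⟩ := hGfacts P hP i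
      exact ⟨z, (pathComponent_eq_partition_graph f P hP i z hz).symm⟩
end

section
/- In the basic-lift setup, let S = {i_1,...,i_k} ⊆ {1,...,n} be a σ-class of the lift f̄ of the n-valued map f: X → D_n(X). Then the formula g(x) = {p(f̄_{i_1}(x̃)), ..., p(f̄_{i_k}(x̃))}, where x̃ is any point of p^{-1}(x), is independent of the choice of x̃ and defines a continuous k-valued map g: X → D_k(X) which is a submap of f and which lifts to (f̄_{i_1},...,f̄_{i_k}). -/
open Function Set

/-- The universal-covering setup: `p : X̃ → X` is a universal covering with deck
transformation group `π` acting freely and transitively on fibers. -/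
structure DeckSetup (π : Type*) [Group π] (Xt X : Type*) [TopologicalSpace Xt]
    [TopologicalSpace X] [MulAction π Xt] (p : Xt → X) : Prop where
  continuous_p : Continuous p
  covering : IsCoveringMap p
  simplyConnected : SimplyConnectedSpace Xt
  continuous_smul : ∀ γ : π, Continuous fun x : Xt => γ • x
  p_smul : ∀ (γ : π) (x : Xt), p (γ • x) = p x
  exists_deck : ∀ x y : Xt, p x = p y → ∃ γ : π, γ • x = y
  free : ∀ (γ : π) (x : Xt), γ • x = x → γ = 1

/-- A lift `f̄ = (f̄_1,…,f̄_n) : X̃ → F_n(X̃,π)` of an `n`-valued selfmap `f` of `X`,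
together with its associated data `φ_1,…,φ_n : π → π` and homomorphism
`σ : π → Σ_n` satisfying `f̄_i(α·x̃) = φ_i(α)·f̄_{σ_α⁻¹(i)}(x̃)`. -/
structure NVLift {π Xt X : Type*} [Group π] [TopologicalSpace Xt] [TopologicalSpace X]
    [MulAction π Xt] (p : Xt → X) {n : ℕ} (f : NValuedMap X X n) where
  fbar : Fin n → Xt → Xt
  continuous_fbar : ∀ i, Continuous (fbar i)
  inj : ∀ x : Xt, Function.Injective fun i => p (fbar i x)
  lifts : ∀ x : Xt, UnordConf.values (f (p x)) = Set.range fun i => p (fbar i x)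
  phi : Fin n → π → π
  sigma : π →* Equiv.Perm (Fin n)
  equivar : ∀ (α : π) (x : Xt) (i : Fin n),
    fbar i (α • x) = phi i α • fbar ((sigma α)⁻¹ i) x

/-- `S` is a σ-class: an equivalence class of the relation `i ∼ j ↔ ∃ γ, σ_γ(j) = i`. -/
def IsSigmaClass {π : Type*} [Group π] {n : ℕ} (σ : π →* Equiv.Perm (Fin n))
    (S : Set (Fin n)) : Prop :=
  ∃ j : Fin n, S = {i | ∃ γ : π, σ γ j = i}

theorem statement_5 {π Xt X : Type*} [Group π] [TopologicalSpace Xt] [TopologicalSpace X]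
    [MulAction π Xt] [ConnectedSpace X] (hX : IsFinitePolyhedron X)
    {p : Xt → X} (hp : DeckSetup π Xt X p)
    {n : ℕ} {f : NValuedMap X X n} (L : NVLift (π := π) p f)
    (S : Finset (Fin n)) (hS : IsSigmaClass L.sigma ↑S) :
    ∃ g : NValuedMap X X S.card, IsSubmap g f ∧
      ∀ x : Xt, UnordConf.values (g (p x)) = {y : X | ∃ i ∈ S, y = p (L.fbar i x)} := by
  classical
  obtain ⟨j, hj⟩ := hS
  -- membership criterion and closure of S under σ
  have memS : ∀ i : Fin n, i ∈ S ↔ ∃ γ : π, L.sigma γ j = i := by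
    intro i
    rw [← Finset.mem_coe, hj]; rfl
  have closed : ∀ (γ : π) (i : Fin n), i ∈ S → L.sigma γ i ∈ S := by
    intro γ i hi
    obtain ⟨δ, hδ⟩ := (memS i).mp hi
    exact (memS _).mpr ⟨γ * δ, by rw [map_mul]; simp [hδ]⟩
  -- Xt is nonempty
  have : SimplyConnectedSpace Xt := hp.simplyConnected
  have hpc : PathConnectedSpace Xt := inferInstance
  have hne : Nonempty Xt := hpc.nonempty
  -- p is surjective
  have hsurj : Function.Surjective p := by
    have hclopen : IsClopen (Set.range p) := by
      constructor
      · rw [← isOpen_compl_iff, isOpen_iff_mem_nhds]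
        intro x hx
        obtain ⟨_, U, hxU, hU, hfU, H, hH⟩ := hp.covering x
        refine Filter.mem_of_superset (hU.mem_nhds hxU) ?_
        intro y hy
        rintro ⟨z, rfl⟩
        have hz : z ∈ p ⁻¹' U := hy
        exact hx ⟨(H ⟨z, hz⟩).2.1, (H ⟨z, hz⟩).2.2⟩
      · exact hp.covering.isOpenMap.isOpen_range
    have := hclopen.eq_univ (Set.range_nonempty p)
    intro x
    have : x ∈ Set.range p := by rw [this]; trivial
    exact this
  have hq : Topology.IsQuotientMap p := hp.covering.isQuotientMap hsurj
  -- the ordered lift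
  set k := S.card with hk
  let e : Fin k → Fin n := S.orderEmbOfFin rfl
  have he_mem : ∀ i, e i ∈ S := fun i => S.orderEmbOfFin_mem rfl i
  have he_inj : Function.Injective e := (S.orderEmbOfFin rfl).injective
  have he_surj : ∀ a ∈ S, ∃ i, e i = a := by
    intro a ha
    have := S.range_orderEmbOfFin rfl
    have : a ∈ Set.range e := by rw [Finset.range_orderEmbOfFin]; exact ha
    exact this
  let F : Xt → OrdConf k X := fun x =>
    ⟨fun i => p (L.fbar (e i) x), fun a b hab => he_inj (L.inj x hab)⟩
  have hFcont : Continuous F := by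
    apply Continuous.subtype_mk
    exact continuous_pi fun i => hp.continuous_p.comp (L.continuous_fbar (e i))
  let G : Xt → UnordConf k X := fun x => Quotient.mk (confSetoid k X) (F x)
  have hGcont : Continuous G := continuous_quotient_mk'.comp hFcont
  -- well-definedness along fibers
  have hGfib : ∀ x y : Xt, p x = p y → G x = G y := by
    intro x y hxy
    obtain ⟨γ, hγ⟩ := hp.exists_deck x y hxy
    -- σ_γ⁻¹ maps S to S, giving a permutation of Fin k
    have hmem : ∀ i : Fin k, L.sigma γ⁻¹ (e i) ∈ S := fun i =>
      closed γ⁻¹ (e i) (he_mem i)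
    let t : Fin k → Fin k := fun i => (he_surj _ (hmem i)).choose
    have ht : ∀ i, e (t i) = L.sigma γ⁻¹ (e i) := fun i => (he_surj _ (hmem i)).choose_spec
    have htinj : Function.Injective t := by
      intro a b hab
      have := congrArg e hab
      rw [ht, ht] at this
      exact he_inj ((L.sigma γ⁻¹).injective this)
    have htbij : Function.Bijective t := Finite.injective_iff_bijective.mp htinj
    apply Quotient.sound
    refine ⟨Equiv.ofBijective t htbij, funext fun i => ?_⟩
    show p (L.fbar (e (t i)) x) = p (L.fbar (e i) y)
    rw [← hγ, L.equivar γ x (e i), hp.p_smul]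
    congr 1
    rw [ht i, ← map_inv]
  -- descend to X
  let g0 : X → UnordConf k X := fun x => G (hsurj x).choose
  have hg0 : ∀ x : Xt, g0 (p x) = G x := by
    intro x
    exact hGfib _ _ (hsurj (p x)).choose_spec
  have hg0cont : Continuous g0 := by
    rw [hq.continuous_iff]
    have : g0 ∘ p = G := funext hg0
    rw [this]; exact hGcont
  -- values of G
  have hval : ∀ x : Xt, UnordConf.values (G x) = {y : X | ∃ i ∈ S, y = p (L.fbar i x)} := by
    intro x
    show Set.range (fun i => p (L.fbar (e i) x)) = _
    ext y
    constructor
    · rintro ⟨i, rfl⟩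
      exact ⟨e i, he_mem i, rfl⟩
    · rintro ⟨a, ha, rfl⟩
      obtain ⟨i, rfl⟩ := he_surj a ha
      exact ⟨i, rfl⟩
  refine ⟨⟨g0, hg0cont⟩, ?_, ?_⟩
  · intro x
    obtain ⟨x', rfl⟩ := hsurj x
    show UnordConf.values (g0 (p x')) ⊆ _
    rw [hg0, hval, L.lifts]
    rintro y ⟨i, _, rfl⟩
    exact ⟨i, rfl⟩
  · intro x
    show UnordConf.values (g0 (p x)) = _
    rw [hg0, hval]
end

section
/- In the basic-lift setup, suppose i, j ∈ {1,...,n} lie in different σ-classes (i.e., there is no γ ∈ π with σ_γ(j) = i). Then for all α, β ∈ π, the sets p(Fix(α ∘ f̄_i)) and p(Fix(β ∘ f̄_j)) are disjoint, where Fix(h) = {x̃ ∈ X̃ : h(x̃) = x̃}. Consequently, if f = {g, h} is a partition of f into two submaps, every fixed point class of g is disjoint from every fixed point class of h. -/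
open Function Set

theorem statement_8 {π Xt X : Type*} [Group π] [TopologicalSpace Xt] [TopologicalSpace X]
    [MulAction π Xt] [ConnectedSpace X] (hX : IsFinitePolyhedron X)
    {p : Xt → X} (hp : DeckSetup π Xt X p)
    {n : ℕ} {f : NValuedMap X X n} (L : NVLift (π := π) p f) :
    (∀ i j : Fin n, (¬ ∃ γ : π, L.sigma γ j = i) →
      ∀ α β : π,
        Disjoint (p '' {x : Xt | α • L.fbar i x = x}) (p '' {x : Xt | β • L.fbar j x = x})) ∧
    (∀ (k m : ℕ), k + m = n →
      ∀ (g : NValuedMap X X k) (h : NValuedMap X X m)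
        (indg : Fin k → Fin n) (indh : Fin m → Fin n),
        (∀ x : Xt, UnordConf.values (g (p x)) = Set.range fun a => p (L.fbar (indg a) x)) →
        (∀ x : Xt, UnordConf.values (h (p x)) = Set.range fun b => p (L.fbar (indh b) x)) →
        (∀ x : X, UnordConf.values (f x) = UnordConf.values (g x) ∪ UnordConf.values (h x)) →
        ∀ (α β : π) (a : Fin k) (b : Fin m),
          Disjoint (p '' {x : Xt | α • L.fbar (indg a) x = x})
            (p '' {x : Xt | β • L.fbar (indh b) x = x})) := by
  have key : ∀ i j : Fin n, (¬ ∃ γ : π, L.sigma γ j = i) →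
      ∀ α β : π,
        Disjoint (p '' {x : Xt | α • L.fbar i x = x}) (p '' {x : Xt | β • L.fbar j x = x}) := by
    intro i j hij α β
    rw [Set.disjoint_left]
    rintro z ⟨x, hx, rfl⟩ ⟨y, hy, hpxy⟩
    simp only [mem_setOf_eq] at hx hy
    obtain ⟨γ, hγ⟩ := hp.exists_deck x y hpxy.symm
    have h1 : p (L.fbar ((L.sigma γ)⁻¹ j) x) = p (L.fbar j y) := by
      rw [← hγ, L.equivar, hp.p_smul]
    have h2 : p (L.fbar j y) = p y := by
      conv_rhs => rw [← hy]
      rw [hp.p_smul]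
    have h3 : p (L.fbar i x) = p x := by
      conv_rhs => rw [← hx]
      rw [hp.p_smul]
    have h4 : (fun i => p (L.fbar i x)) ((L.sigma γ)⁻¹ j) = (fun i => p (L.fbar i x)) i := by
      simp only []
      rw [h1, h2, hpxy, h3]
    have h5 := L.inj x h4
    exact hij ⟨γ⁻¹, by rw [map_inv]; exact h5⟩
  refine ⟨key, ?_⟩
  intro k m hkm g h indg indh hg hh hf α β a b
  by_cases hE : IsEmpty Xt
  · have e1 : ({x : Xt | α • L.fbar (indg a) x = x}) = ∅ := Set.eq_empty_of_isEmpty _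
    rw [e1, Set.image_empty]
    exact disjoint_bot_left
  · have hne : Nonempty Xt := not_isEmpty_iff.mp hE
    apply key
    rintro ⟨γ, hγ⟩
    obtain ⟨x⟩ := hne
    -- disjointness of the values of g and h at p x by cardinality
    set A := UnordConf.values (g (p x)) with hA
    set B := UnordConf.values (h (p x)) with hB
    have hAfin : A.Finite := by rw [hA, hg x]; exact Set.finite_range _
    have hBfin : B.Finite := by rw [hB, hh x]; exact Set.finite_range _
    have hAle : A.ncard ≤ k := by
      rw [hA, hg x, ← Set.image_univ]
      calc ((fun a => p (L.fbar (indg a) x)) '' univ).ncard ≤ (univ : Set (Fin k)).ncard :=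
            Set.ncard_image_le Set.finite_univ
        _ = k := by rw [Set.ncard_univ, Nat.card_eq_fintype_card, Fintype.card_fin]
    have hBle : B.ncard ≤ m := by
      rw [hB, hh x, ← Set.image_univ]
      calc ((fun b => p (L.fbar (indh b) x)) '' univ).ncard ≤ (univ : Set (Fin m)).ncard :=
            Set.ncard_image_le Set.finite_univ
        _ = m := by rw [Set.ncard_univ, Nat.card_eq_fintype_card, Fintype.card_fin]
    have hUn : (A ∪ B).ncard = n := by
      rw [hA, hB, ← hf (p x), L.lifts x, ← Set.image_univ,
        Set.ncard_image_of_injective _ (L.inj x), Set.ncard_univ,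
        Nat.card_eq_fintype_card, Fintype.card_fin]
    have hsum := Set.ncard_inter_add_ncard_union A B hAfin hBfin
    have hzero : (A ∩ B).ncard = 0 := by omega
    have hempty : A ∩ B = ∅ := by
      have := (Set.ncard_eq_zero (hAfin.inter_of_left B)).mp hzero
      exact this
    -- produce an element of A ∩ B
    have hinv : (L.sigma γ)⁻¹ (indg a) = indh b := by
      rw [Equiv.Perm.inv_eq_iff_eq]; exact hγ.symm
    have hq1 : p (L.fbar (indg a) (γ • x)) ∈ A := by
      have := hg (γ • x)
      rw [hp.p_smul, ← hA] at this
      rw [this]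
      exact ⟨a, rfl⟩
    have hq2 : p (L.fbar (indg a) (γ • x)) ∈ B := by
      rw [L.equivar, hinv, hp.p_smul, hB, hh x]
      exact ⟨b, rfl⟩
    exact absurd (hempty ▸ ⟨hq1, hq2⟩ : p (L.fbar (indg a) (γ • x)) ∈ (∅ : Set X)) (by simp)
end

section
/- Let A be a q×q integer matrix all of whose rows are congruent mod n to a fixed vector (l_1,...,l_q). Then the linear n-valued map f_{n,A}: T^q → D_n(T^q) has a proper partition if and only if there exists an integer m > 1 which is a common factor of n and of every l_j. -/
open Function Set

/-- The `q`-torus `ℝ^q/ℤ^q`. -/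
abbrev Torus (q : ℕ) := Fin q → AddCircle (1 : ℝ)

/-- The universal covering projection `ℝ^q → T^q`, `t ↦ t mod 1`. -/
noncomputable def torusProj {q : ℕ} (t : Fin q → ℝ) : Torus q := fun i => (t i : AddCircle (1 : ℝ))

/-- The affine lift `f^k_{n,A}(t) = (1/n)(At + k·c)`, where `c = (1,…,1)`. -/
noncomputable def linLift {q : ℕ} (n : ℕ) (A : Matrix (Fin q) (Fin q) ℤ) (k : ℤ) (t : Fin q → ℝ) :
    Fin q → ℝ :=
  fun i => (1 / (n : ℝ)) * ((A.map (Int.cast : ℤ → ℝ)).mulVec t i + (k : ℝ))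

/-- `f` is (a representative of) the linear `n`-valued torus map `f_{n,A}` induced by `A`:
its value at `p^q(t)` is `{p^q(f^1_{n,A}(t)), …, p^q(f^n_{n,A}(t))}`. -/
def IsLinearNV {q : ℕ} (n : ℕ) (A : Matrix (Fin q) (Fin q) ℤ)
    (f : NValuedMap (Torus q) (Torus q) n) : Prop :=
  ∀ t : Fin q → ℝ,
    UnordConf.values (f (torusProj t)) =
      Set.range fun k : Fin n => torusProj (linLift n A ((k : ℕ) + 1) t)

/-- `f` has a proper partition: a partition into at least two multimaps. -/
def HasProperPartition {X Y : Type*} [TopologicalSpace X] [TopologicalSpace Y] {n : ℕ}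
    (f : NValuedMap X Y n) : Prop :=
  ∃ l : ℕ, 2 ≤ l ∧ Nonempty (NVPartition f l)

section Aux

open Function Set

lemma aux_coe_eq_iff (x y : ℝ) : (x : AddCircle (1:ℝ)) = y ↔ ∃ z : ℤ, x - y = z := by
  rw [QuotientAddGroup.eq_iff_sub_mem]
  constructor
  · rintro h
    rcases AddSubgroup.mem_zmultiples_iff.mp h with ⟨z, hz⟩
    exact ⟨z, by simpa using hz.symm⟩
  · rintro ⟨z, hz⟩
    exact AddSubgroup.mem_zmultiples_iff.mpr ⟨z, by simpa using hz.symm⟩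

lemma aux_linLift_sub {q n : ℕ} (A : Matrix (Fin q) (Fin q) ℤ) (k k' : ℤ) (t : Fin q → ℝ)
    (i : Fin q) : linLift n A k t i - linLift n A k' t i = ((k : ℝ) - k') / n := by
  simp only [linLift]; ring

lemma aux_lin_eq {q n : ℕ} (hn : 0 < n) (A : Matrix (Fin q) (Fin q) ℤ) {k k' : ℤ}
    (h : (n : ℤ) ∣ k - k') (t : Fin q → ℝ) :
    torusProj (linLift n A k t) = torusProj (linLift n A k' t) := by
  funext i
  rcases h with ⟨z, hz⟩
  refine (aux_coe_eq_iff _ _).mpr ⟨z, ?_⟩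
  rw [aux_linLift_sub]
  have hn' : (n : ℝ) ≠ 0 := by positivity
  field_simp
  have : ((k - k' : ℤ) : ℝ) = (((n:ℤ) * z : ℤ) : ℝ) := by rw [hz]
  push_cast at this
  linarith

lemma aux_lin_dvd {q n : ℕ} (hn : 0 < n) (A : Matrix (Fin q) (Fin q) ℤ) {k k' : ℤ}
    (i0 : Fin q) (t : Fin q → ℝ)
    (h : torusProj (linLift n A k t) = torusProj (linLift n A k' t)) :
    (n : ℤ) ∣ k - k' := by
  have h0 := congrFun h i0
  rcases (aux_coe_eq_iff _ _).mp h0 with ⟨z, hz⟩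
  rw [aux_linLift_sub] at hz
  have hn' : (n : ℝ) ≠ 0 := by positivity
  refine ⟨z, ?_⟩
  have : (k : ℝ) - k' = n * z := by field_simp at hz; linarith
  exact_mod_cast this

lemma aux_lin_translate {q n : ℕ} (hn : 0 < n) {A : Matrix (Fin q) (Fin q) ℤ} {l : Fin q → ℤ}
    (hrow : ∀ i j, A i j ≡ l j [ZMOD (n:ℤ)]) (k : ℤ) (t : Fin q → ℝ) (v : Fin q → ℤ) :
    torusProj (linLift n A k (fun i => t i + (v i : ℝ))) =
      torusProj (linLift n A (k + ∑ j, l j * v j) t) := by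
  funext i
  have hdvd : (n:ℤ) ∣ (∑ j, A i j * v j) - ∑ j, l j * v j := by
    rw [← Finset.sum_sub_distrib]
    refine Finset.dvd_sum fun j _ => ?_
    have h1 : (n:ℤ) ∣ l j - A i j := (hrow i j).dvd
    have h2 : A i j * v j - l j * v j = -((l j - A i j) * v j) := by ring
    rw [h2]
    exact dvd_neg.mpr (h1.mul_right _)
  rcases hdvd with ⟨w, hw⟩
  refine (aux_coe_eq_iff _ _).mpr ⟨w, ?_⟩
  have key : (∑ j, (A i j : ℝ) * (v j : ℝ)) - (∑ j, ((l j : ℝ) * (v j : ℝ))) = (n:ℝ) * w := by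
    have h3 := congrArg (Int.cast : ℤ → ℝ) hw
    push_cast at h3
    convert h3 using 2
  have hn' : (n:ℝ) ≠ 0 := by positivity
  simp only [linLift, Matrix.mulVec, dotProduct, Matrix.map_apply, mul_add,
    Finset.sum_add_distrib]
  push_cast
  field_simp
  linarith [key]

lemma aux_torusProj_oqm {q : ℕ} : IsOpenQuotientMap (torusProj (q := q)) := by
  have h : torusProj (q := q)
      = Pi.map (fun _ : Fin q => (QuotientAddGroup.mk : ℝ → AddCircle (1:ℝ))) := rfl
  rw [h]
  exact IsOpenQuotientMap.piMap fun _ => QuotientAddGroup.isOpenQuotientMap_mk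

lemma aux_values_mk {k : ℕ} {Y : Type*} [TopologicalSpace Y] (a : OrdConf k Y) :
    UnordConf.values (Quotient.mk (confSetoid k Y) a) = Set.range a.1 := rfl

lemma aux_values_finite {k : ℕ} {Y : Type*} [TopologicalSpace Y] (c : UnordConf k Y) :
    c.values.Finite := by
  obtain ⟨a, rfl⟩ := Quotient.exists_rep c
  exact Set.finite_range _

lemma aux_values_ncard {k : ℕ} {Y : Type*} [TopologicalSpace Y] (c : UnordConf k Y) :
    c.values.ncard = k := by
  obtain ⟨a, rfl⟩ := Quotient.exists_rep c
  show (Set.range a.1).ncard = k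
  rw [← Set.image_univ, Set.ncard_image_of_injective _ a.2, Set.ncard_univ]
  simp

end Aux
section Aux2

open Function Set

lemma aux_mem_values_closed {X Y : Type*} [TopologicalSpace X] [TopologicalSpace Y]
    [T2Space Y] {k : ℕ} (g : NValuedMap X Y k) :
    IsClosed {p : X × Y | p.2 ∈ (g p.1).values} := by
  rw [← isOpen_compl_iff]
  rw [isOpen_iff_forall_mem_open]
  rintro ⟨x0, y0⟩ hp
  simp only [mem_compl_iff, mem_setOf_eq] at hp
  obtain ⟨a, ha⟩ := Quotient.exists_rep (g x0)
  have hy0 : ∀ i : Fin k, a.1 i ≠ y0 := by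
    intro i he
    exact hp (by rw [← ha]; exact ⟨i, he⟩)
  choose U W hUo hWo haU hyW hdisj using fun i => t2_separation (hy0 i)
  set O : Set (UnordConf k Y) := {c | c.values ⊆ ⋃ i, U i} with hO
  have hOopen : IsOpen O := by
    have : IsOpen ((Quotient.mk (confSetoid k Y)) ⁻¹' O) := by
      have hpre : (Quotient.mk (confSetoid k Y)) ⁻¹' O
          = ⋂ i : Fin k, (fun b : OrdConf k Y => b.1 i) ⁻¹' (⋃ i, U i) := by
        ext b
        simp only [mem_preimage, mem_iInter, hO, mem_setOf_eq]
        constructor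
        · intro hb i; exact hb ⟨i, rfl⟩
        · rintro hb y ⟨i, rfl⟩; exact hb i
      rw [hpre]
      exact isOpen_iInter_of_finite fun i =>
        (isOpen_iUnion hUo).preimage ((continuous_apply i).comp continuous_subtype_val)
    exact isQuotientMap_quotient_mk'.isOpen_preimage.mp this
  refine ⟨(g ⁻¹' O) ×ˢ (⋂ i, W i), ?_, ?_, ?_⟩
  · rintro ⟨x, y⟩ ⟨hx, hy⟩
    simp only [mem_compl_iff, mem_setOf_eq]
    intro hmem
    have hyU : y ∈ ⋃ i, U i := hx hmem
    obtain ⟨i, hi⟩ := mem_iUnion.mp hyU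
    exact (hdisj i).ne_of_mem hi (mem_iInter.mp hy i) rfl
  · exact ((hOopen.preimage g.continuous).prod (isOpen_iInter_of_finite hWo))
  · refine ⟨?_, ?_⟩
    · show g x0 ∈ O
      rw [← ha]
      rintro y ⟨i, rfl⟩
      exact mem_iUnion.mpr ⟨i, haU i⟩
    · exact mem_iInter.mpr hyW

lemma aux_disjoint_of_card {Y : Type*} {L N : ℕ} (V : Fin L → Set Y)
    (hfin : ∀ i, (V i).Finite) (hsum : ∑ i, (V i).ncard = N)
    (hU : (⋃ i, V i).ncard = N) :
    Pairwise fun i i' => Disjoint (V i) (V i') := by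
  classical
  rw [Pairwise] at *
  by_contra hcon
  push_neg at hcon
  obtain ⟨i, i', hne, hnd⟩ := hcon
  obtain ⟨y, hyi, hyi'⟩ := Set.not_disjoint_iff.mp hnd
  set F : Fin L → Finset Y := fun r => (hfin r).toFinset with hF
  have hmemF : ∀ r x, x ∈ F r ↔ x ∈ V r := by
    intro r x; simp [hF, Set.Finite.mem_toFinset]
  have hcF : ∀ r, (F r).card = (V r).ncard := fun r =>
    (Set.ncard_eq_toFinset_card _ (hfin r)).symm
  set F' : Fin L → Finset Y := Function.update F i' ((F i').erase y) with hF'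
  have hsub : ∀ r, F' r ⊆ F r := by
    intro r
    by_cases h : r = i'
    · subst h; rw [hF', Function.update_self]; exact Finset.erase_subset _ _
    · rw [hF', Function.update_of_ne h]
  have hbiU : Finset.univ.biUnion F = Finset.univ.biUnion F' := by
    ext z
    constructor
    · intro hz0
      obtain ⟨r, _, hr⟩ := Finset.mem_biUnion.mp hz0
      refine Finset.mem_biUnion.mpr ?_
      by_cases hz : z = y
      · refine ⟨i, Finset.mem_univ _, ?_⟩
        rw [hF', Function.update_of_ne hne, hz]
        exact (hmemF i y).mpr hyi
      · by_cases h : r = i'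
        · refine ⟨i', Finset.mem_univ _, ?_⟩
          rw [hF', Function.update_self]
          exact Finset.mem_erase.mpr ⟨hz, h ▸ hr⟩
        · exact ⟨r, Finset.mem_univ _, by rw [hF', Function.update_of_ne h]; exact hr⟩
    · intro hz0
      obtain ⟨r, _, hr⟩ := Finset.mem_biUnion.mp hz0
      exact Finset.mem_biUnion.mpr ⟨r, Finset.mem_univ _, hsub r hr⟩
  have hcard_biU : (Finset.univ.biUnion F).card = N := by
    have h1 : (⋃ r, V r) = ↑(Finset.univ.biUnion F) := by
      ext z
      simp only [Set.mem_iUnion, Finset.coe_biUnion, Finset.mem_coe, Finset.mem_univ,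
        Set.mem_iUnion, Set.iUnion_true]
      constructor
      · rintro ⟨r, hr⟩; exact ⟨r, (hmemF r z).mpr hr⟩
      · rintro ⟨r, hr⟩; exact ⟨r, (hmemF r z).mp hr⟩
    rw [h1, Set.ncard_coe_finset] at hU
    exact hU
  have hyF : y ∈ F i' := (hmemF i' y).mpr hyi'
  have hcard_upd : (F' i').card = (F i').card - 1 := by
    rw [hF', Function.update_self, Finset.card_erase_of_mem hyF]
  have hpos : 1 ≤ (F i').card := Finset.card_pos.mpr ⟨y, hyF⟩
  have hle : (Finset.univ.biUnion F').card ≤ ∑ r, (F' r).card := Finset.card_biUnion_le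
  have h2 : ∑ r, (F r).card = (F i').card + ∑ r ∈ Finset.univ.erase i', (F r).card :=
    (Finset.add_sum_erase _ _ (Finset.mem_univ i')).symm
  have h3 : ∑ r, (F' r).card = (F' i').card + ∑ r ∈ Finset.univ.erase i', (F' r).card :=
    (Finset.add_sum_erase _ _ (Finset.mem_univ i')).symm
  have h4 : ∑ r ∈ Finset.univ.erase i', (F' r).card
      = ∑ r ∈ Finset.univ.erase i', (F r).card := by
    refine Finset.sum_congr rfl fun r hr => ?_
    rw [hF', Function.update_of_ne (Finset.mem_erase.mp hr).1]
  have hNsum : ∑ r, (F r).card = N := by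
    rw [← hsum]; exact Finset.sum_congr rfl fun r _ => hcF r
  rw [hbiU] at hcard_biU
  omega

lemma aux_clopen_cover {L : ℕ} (C : Fin L → Set ℝ) (hC : ∀ i, IsClosed (C i))
    (hdisj : Pairwise fun i i' => Disjoint (C i) (C i'))
    (hcover : ∀ s : ℝ, ∃ i, s ∈ C i) {i0 : Fin L} {s0 : ℝ}
    (h0 : s0 ∈ C i0) (s1 : ℝ) : s1 ∈ C i0 := by
  have hopen : IsOpen (C i0) := by
    have hcompl : (C i0)ᶜ = ⋃ i ∈ ({i : Fin L | i ≠ i0} : Set (Fin L)), C i := by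
      ext s
      simp only [mem_compl_iff, mem_iUnion, mem_setOf_eq]
      constructor
      · intro hs
        obtain ⟨i, hi⟩ := hcover s
        exact ⟨i, fun h => hs (h ▸ hi), hi⟩
      · rintro ⟨i, hne, hi⟩ hs
        exact (hdisj hne).ne_of_mem hi hs rfl
    rw [← isClosed_compl_iff, hcompl]
    exact Set.Finite.isClosed_biUnion (Set.toFinite _) fun i _ => hC i
  have : C i0 = Set.univ := IsClopen.eq_univ ⟨hC i0, hopen⟩ ⟨s0, h0⟩
  rw [this]; trivial

lemma aux_cont_linPoint {q n : ℕ} (A : Matrix (Fin q) (Fin q) ℤ) (k : ℤ) :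
    Continuous fun t : Fin q → ℝ => torusProj (linLift n A k t) := by
  refine continuous_pi fun i => Continuous.comp (continuous_quotient_mk') ?_
  show Continuous fun t : Fin q → ℝ => (1 / (n:ℝ)) * ((A.map (Int.cast : ℤ → ℝ)).mulVec t i + k)
  refine continuous_const.mul (Continuous.add ?_ continuous_const)
  simp only [Matrix.mulVec, dotProduct]
  exact continuous_finset_sum _ fun j _ => continuous_const.mul (continuous_apply j)

end Aux2
theorem statement_9 {q n : ℕ} (hn : 0 < n) (A : Matrix (Fin q) (Fin q) ℤ) (l : Fin q → ℤ)
    (hrow : ∀ i j, A i j ≡ l j [ZMOD (n : ℤ)])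
    (f : NValuedMap (Torus q) (Torus q) n) (hf : IsLinearNV n A f) :
    HasProperPartition f ↔ ∃ m : ℤ, 1 < m ∧ m ∣ (n : ℤ) ∧ ∀ j, m ∣ l j := by
  constructor
  · -- Forward direction
    rintro ⟨L, hL2, ⟨P⟩⟩
    set x0 : Torus q := torusProj (fun _ : Fin q => (0:ℝ)) with hx0
    set pt : ℤ → Torus q := fun k => torusProj (linLift n A k (fun _ => 0)) with hpt
    set V : Fin L → Set (Torus q) := fun i => UnordConf.values (P.maps i x0) with hV
    have hdisjAt : ∀ u : Torus q, Pairwise fun i i' =>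
        Disjoint (UnordConf.values (P.maps i u)) (UnordConf.values (P.maps i' u)) := by
      intro u
      refine aux_disjoint_of_card (N := n) _ (fun i => aux_values_finite _) ?_ ?_
      · exact (Finset.sum_congr rfl fun i _ => aux_values_ncard _).trans P.sum_card
      · rw [← P.values_eq u]
        exact aux_values_ncard _
    have hreduce : ∀ k : ℤ, ∃ k' : Fin n, (n:ℤ) ∣ k - (((k':ℕ):ℤ) + 1) := by
      intro k
      have hn' : (n:ℤ) ≠ 0 := by exact_mod_cast hn.ne'
      have hr0 : 0 ≤ (k-1) % (n:ℤ) := Int.emod_nonneg _ hn'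
      have hrlt : (k-1) % (n:ℤ) < n := Int.emod_lt_of_pos _ (by exact_mod_cast hn)
      refine ⟨⟨((k-1) % (n:ℤ)).toNat, by omega⟩, ⟨(k-1) / n, ?_⟩⟩
      have h1 : ((((k-1) % (n:ℤ)).toNat : ℤ)) = (k-1) % n := Int.toNat_of_nonneg hr0
      simp only [h1]
      rw [Int.emod_def]
      ring
    have hmem_total : ∀ k : ℤ, ∃ i, pt k ∈ V i := by
      intro k
      obtain ⟨k', hk'⟩ := hreduce k
      have h2 : pt k = pt (((k':ℕ):ℤ)+1) := aux_lin_eq hn A hk' _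
      have h3 : pt (((k':ℕ):ℤ)+1) ∈ UnordConf.values (f x0) := by
        rw [hx0, hf]
        exact ⟨k', rfl⟩
      rw [P.values_eq] at h3
      rw [h2]
      exact Set.mem_iUnion.mp h3
    set pc : ℤ → Fin L := fun k => (hmem_total k).choose with hpcdef
    have hpc : ∀ k, pt k ∈ V (pc k) := fun k => (hmem_total k).choose_spec
    have huniq : ∀ k i, pt k ∈ V i → i = pc k := by
      intro k i hi
      by_contra hne
      exact ((hdisjAt x0) hne).ne_of_mem hi (hpc k) rfl
    set H : AddSubgroup ℤ :=
      { carrier := {g | ∀ k, pc (k + g) = pc k}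
        zero_mem' := by intro k; rw [add_zero]
        add_mem' := by
          intro a b ha hb k
          have h1 : k + (a + b) = (k + a) + b := by ring
          rw [h1, hb (k+a), ha k]
        neg_mem' := by
          intro a ha k
          have h1 : (k + -a) + a = k := by ring
          have := ha (k + -a)
          rw [h1] at this
          exact this.symm } with hH
    have hnH : (n:ℤ) ∈ H := by
      intro k
      have h2 : pt (k+n) = pt k := aux_lin_eq hn A ⟨1, by ring⟩ _
      exact huniq k _ (by rw [← h2]; exact hpc (k+n))
    have hlH : ∀ j : Fin q, l j ∈ H := by
      intro j k
      set tpath : ℝ → (Fin q → ℝ) := fun s => fun i => if i = j then s else 0 with htp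
      have htcont : Continuous tpath := by
        refine continuous_pi fun i => ?_
        by_cases h : i = j
        · simpa [htp, h] using continuous_id'
        · simpa [htp, h] using continuous_const
      set α : ℝ → Torus q := fun s => torusProj (tpath s) with hα
      set γ : ℝ → Torus q := fun s => torusProj (linLift n A k (tpath s)) with hγ
      have hαcont : Continuous α := aux_torusProj_oqm.continuous.comp htcont
      have hγcont : Continuous γ := (aux_cont_linPoint A k).comp htcont
      set C : Fin L → Set ℝ := fun i => {s | γ s ∈ UnordConf.values (P.maps i (α s))} with hC
      have hCclosed : ∀ i, IsClosed (C i) := fun i =>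
        (aux_mem_values_closed (P.maps i)).preimage (hαcont.prodMk hγcont)
      have hCdisj : Pairwise fun i i' => Disjoint (C i) (C i') := by
        intro i i' hne
        rw [Set.disjoint_left]
        intro s hs hs'
        exact ((hdisjAt (α s)) hne).ne_of_mem hs hs' rfl
      have hCcover : ∀ s : ℝ, ∃ i, s ∈ C i := by
        intro s
        obtain ⟨k', hk'⟩ := hreduce k
        have h2 : γ s = torusProj (linLift n A (((k':ℕ):ℤ)+1) (tpath s)) := by
          rw [hγ]
          exact aux_lin_eq hn A hk' _
        have h3 : γ s ∈ UnordConf.values (f (α s)) := by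
          rw [hα, hf, h2]
          exact ⟨k', rfl⟩
        rw [P.values_eq] at h3
        obtain ⟨i, hi⟩ := Set.mem_iUnion.mp h3
        exact ⟨i, hi⟩
      have ht0 : tpath 0 = fun _ : Fin q => (0:ℝ) := by
        funext i; simp [htp]
      have h0mem : (0:ℝ) ∈ C (pc k) := by
        have hgoal : torusProj (linLift n A k (tpath 0))
            ∈ UnordConf.values (P.maps (pc k) (torusProj (tpath 0))) := by
          rw [ht0]; exact hpc k
        exact hgoal
      have h1mem := aux_clopen_cover C hCclosed hCdisj hCcover h0mem 1
      set v : Fin q → ℤ := fun i => if i = j then 1 else 0 with hv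
      have ht1 : tpath 1 = fun i => (fun _ : Fin q => (0:ℝ)) i + ((v i : ℤ) : ℝ) := by
        funext i
        by_cases h : i = j <;> simp [htp, hv, h]
      have hsum1 : (∑ j', l j' * v j') = l j := by
        rw [hv]
        simp [mul_ite]
      have hγ1 : torusProj (linLift n A k (tpath 1)) = pt (k + l j) := by
        rw [ht1, aux_lin_translate hn hrow k _ v, hsum1]
      have hα1 : torusProj (tpath 1) = x0 := by
        rw [hx0]
        funext i
        refine (aux_coe_eq_iff _ _).mpr ⟨v i, ?_⟩
        by_cases h : i = j <;> simp [htp, hv, h]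
      have h1mem' : torusProj (linLift n A k (tpath 1))
          ∈ UnordConf.values (P.maps (pc k) (torusProj (tpath 1))) := h1mem
      rw [hγ1, hα1] at h1mem'
      exact (huniq (k + l j) (pc k) h1mem').symm
    obtain ⟨d, hd⟩ := Int.subgroup_cyclic H
    have hdvd_of_mem : ∀ g ∈ H, d ∣ g := by
      intro g hg
      rw [hd] at hg
      obtain ⟨z, hz⟩ := AddSubgroup.mem_closure_singleton.mp hg
      exact ⟨z, by rw [← hz, zsmul_eq_mul, Int.cast_id]; ring⟩
    have hmem_of_dvd : ∀ g : ℤ, d ∣ g → g ∈ H := by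
      rintro g ⟨z, hz⟩
      rw [hd]
      exact AddSubgroup.mem_closure_singleton.mpr ⟨z, by rw [zsmul_eq_mul, Int.cast_id, hz]; ring⟩
    have hdn : d ∣ (n:ℤ) := hdvd_of_mem _ hnH
    have hdl : ∀ j, d ∣ l j := fun j => hdvd_of_mem _ (hlH j)
    have hd1 : 1 < d.natAbs := by
      by_contra hle
      push_neg at hle
      have hd0 : d ≠ 0 := by
        intro h0
        rw [h0] at hdn
        have : (n:ℤ) = 0 := zero_dvd_iff.mp hdn
        omega
      have hdu : IsUnit d := by
        rw [Int.isUnit_iff_natAbs_eq]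
        omega
      have h1H : ∀ g : ℤ, g ∈ H := fun g => hmem_of_dvd g (hdu.dvd)
      have hconst : ∀ k : ℤ, pc k = pc 1 := by
        intro k
        have := h1H (k - 1) 1
        simpa [show (1:ℤ) + (k-1) = k by ring] using this
      have hsubset : UnordConf.values (f x0) ⊆ V (pc 1) := by
        rw [hx0, hf]
        rintro y ⟨k', rfl⟩
        have h5 := hpc (((k':ℕ):ℤ)+1)
        rwa [hconst] at h5
      have hn_le : n ≤ P.card (pc 1) := by
        have h6 : (UnordConf.values (f x0)).ncard ≤ (V (pc 1)).ncard :=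
          Set.ncard_le_ncard hsubset (aux_values_finite _)
        rw [aux_values_ncard] at h6
        rw [hV] at h6
        rw [aux_values_ncard] at h6
        exact h6
      have ha : (0:ℕ) < L := by omega
      have hb : (1:ℕ) < L := by omega
      set a : Fin L := ⟨0, ha⟩
      set b : Fin L := ⟨1, hb⟩
      have hab : a ≠ b := by
        intro h; exact absurd (congrArg Fin.val h) (by simp [a, b])
      set i' : Fin L := if pc 1 = a then b else a with hi'
      have hne' : pc 1 ≠ i' := by
        rw [hi']
        split_ifs with h
        · rw [h]; exact hab
        · exact h
      have hsum_le : P.card (pc 1) + P.card i' ≤ ∑ i, P.card i := by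
        rw [← Finset.sum_pair hne']
        exact Finset.sum_le_sum_of_subset (Finset.subset_univ _)
      have hpos' := P.card_pos i'
      rw [P.sum_card] at hsum_le
      omega
    refine ⟨(d.natAbs : ℤ), by exact_mod_cast hd1, ?_, fun j => ?_⟩
    · exact Int.natAbs_dvd.mpr hdn
    · exact Int.natAbs_dvd.mpr (hdl j)
  · -- Backward direction
    rintro ⟨m, hm1, hmn, hml⟩
    rcases Nat.eq_zero_or_pos q with hq | hq
    · exfalso
      subst hq
      have h2n : 2 ≤ n := by
        have h1 : m ≤ n := Int.le_of_dvd (by exact_mod_cast hn) hmn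
        omega
      obtain ⟨a, ha⟩ := Quotient.exists_rep (f (torusProj (fun _ => 0)))
      have hss : Subsingleton (Torus 0) := by
        constructor
        intro x y
        funext i
        exact absurd i.2 (by omega)
      have h3 : a.1 ⟨0, by omega⟩ = a.1 ⟨1, by omega⟩ := hss.elim _ _
      have h4 := a.2 h3
      have := congrArg Fin.val h4
      simp at this
    · have i0 : Fin q := ⟨0, hq⟩
      set M := m.toNat with hMdef
      have hmM : (M:ℤ) = m := Int.toNat_of_nonneg (by omega)
      have hM2 : 2 ≤ M := by omega
      have hMn : M ∣ n := by
        have h1 : (M:ℤ) ∣ (n:ℤ) := by rw [hmM]; exact hmn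
        exact_mod_cast h1
      set K := n / M with hKdef
      have hKM : M * K = n := Nat.mul_div_cancel' hMn
      have hKpos : 0 < K := Nat.div_pos (Nat.le_of_dvd hn hMn) (by omega)
      haveI : NeZero K := ⟨hKpos.ne'⟩
      set kidx : Fin M → Fin K → ℤ := fun r a => ((r:ℕ):ℤ) + 1 + ((a:ℕ):ℤ) * M with hkidx
      have hinj : ∀ (r : Fin M) (t : Fin q → ℝ),
          Function.Injective fun a : Fin K => torusProj (linLift n A (kidx r a) t) := by
        intro r t a a' h
        have hdv := aux_lin_dvd hn A i0 t h
        have he : kidx r a - kidx r a' = (((a:ℕ):ℤ) - ((a':ℕ):ℤ)) * M := by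
          rw [hkidx]; ring
        rw [he] at hdv
        have hb1 : |(((a:ℕ):ℤ) - ((a':ℕ):ℤ))| ≤ (K:ℤ) - 1 := by
          rw [abs_le]
          have := a.2; have := a'.2
          constructor <;> push_cast <;> omega
        have hb2 : |(((a:ℕ):ℤ) - ((a':ℕ):ℤ)) * M| < (n:ℤ) := by
          rw [abs_mul, abs_of_nonneg (by positivity : (0:ℤ) ≤ (M:ℤ))]
          have h7 : ((K:ℤ) - 1) * M < (n:ℤ) := by
            have h8 : ((M:ℤ) * K) = n := by exact_mod_cast hKM
            nlinarith [show (0:ℤ) < M by omega]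
          calc |(((a:ℕ):ℤ) - ((a':ℕ):ℤ))| * (M:ℤ)
              ≤ ((K:ℤ) - 1) * M := by
                apply mul_le_mul_of_nonneg_right hb1 (by positivity)
            _ < n := h7
        have hz := Int.eq_zero_of_abs_lt_dvd hdv hb2
        have : ((a:ℕ):ℤ) = ((a':ℕ):ℤ) := by
          rcases mul_eq_zero.mp hz with h | h
          · omega
          · exfalso; omega
        exact Fin.ext (by exact_mod_cast this)
      set ordG : Fin M → (Fin q → ℝ) → OrdConf K (Torus q) := fun r t =>
        ⟨fun a => torusProj (linLift n A (kidx r a) t), hinj r t⟩ with hordG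
      set uG : Fin M → (Fin q → ℝ) → UnordConf K (Torus q) := fun r t =>
        Quotient.mk (confSetoid K (Torus q)) (ordG r t) with huG
      have huGcont : ∀ r, Continuous (uG r) := by
        intro r
        apply Continuous.comp
        · exact continuous_quot_mk
        · exact Continuous.subtype_mk (continuous_pi fun a => aux_cont_linPoint A _) _
      have hconst : ∀ r (t t' : Fin q → ℝ), torusProj t = torusProj t' → uG r t = uG r t' := by
        intro r t t' h
        have hv0 : ∀ i, ∃ z : ℤ, t' i - t i = z := by
          intro i
          obtain ⟨z, hz⟩ := (aux_coe_eq_iff (t' i) (t i)).mp (congrFun h i).symm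
          exact ⟨z, hz⟩
        choose v hvs using hv0
        have ht' : t' = fun i => t i + (v i : ℝ) := funext fun i => by linarith [hvs i]
        set S := ∑ j', l j' * v j' with hS
        have hmS : m ∣ S := Finset.dvd_sum fun j' _ => (hml j').mul_right _
        obtain ⟨s, hs⟩ := hmS
        have hsK0 : 0 ≤ s % (K:ℤ) := Int.emod_nonneg _ (by exact_mod_cast hKpos.ne')
        have hsKlt : s % (K:ℤ) < K := Int.emod_lt_of_pos _ (by exact_mod_cast hKpos)
        set c : Fin K := ⟨(s % (K:ℤ)).toNat, by omega⟩ with hc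
        have hcval : ((c:ℕ):ℤ) = s % (K:ℤ) := by
          rw [hc]; exact Int.toNat_of_nonneg hsK0
        rw [huG]
        refine Quot.sound ⟨Equiv.addRight c, funext fun a => ?_⟩
        show torusProj (linLift n A (kidx r (a + c)) t) = torusProj (linLift n A (kidx r a) t')
        rw [ht', aux_lin_translate hn hrow _ t v, ← hS]
        apply aux_lin_eq hn A
        have hval : (((a + c : Fin K):ℕ):ℤ) = (((a:ℕ) + (c:ℕ)) % K : ℕ) := by
          rw [Fin.val_add]
        have hKdvd : (K:ℤ) ∣ (((a + c : Fin K):ℕ):ℤ) - ((a:ℕ):ℤ) - s := by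
          rw [hval]
          push_cast
          rw [hcval]
          have e0 : (((a:ℕ):ℤ) + s % (K:ℤ)) % (K:ℤ) ≡ ((a:ℕ):ℤ) + s [ZMOD (K:ℤ)] := by
            calc (((a:ℕ):ℤ) + s % (K:ℤ)) % (K:ℤ)
                ≡ ((a:ℕ):ℤ) + s % (K:ℤ) [ZMOD (K:ℤ)] := Int.emod_emod_of_dvd _ dvd_rfl
              _ ≡ ((a:ℕ):ℤ) + s [ZMOD (K:ℤ)] :=
                  Int.ModEq.add_left _ (Int.emod_emod_of_dvd _ dvd_rfl)
          have h5 : (((a:ℕ):ℤ) + s % (K:ℤ)) % (K:ℤ) - ((a:ℕ):ℤ) - s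
              = -((((a:ℕ):ℤ) + s) - (((a:ℕ):ℤ) + s % (K:ℤ)) % (K:ℤ)) := by ring
          rw [h5]
          exact dvd_neg.mpr e0.dvd
        obtain ⟨u, hu⟩ := hKdvd
        refine ⟨u, ?_⟩
        have h6 : kidx r (a + c) - (kidx r a + S) = ((((a + c : Fin K):ℕ):ℤ) - ((a:ℕ):ℤ) - s) * M := by
          rw [hkidx, hs, ← hmM]; ring
        rw [h6, hu]
        have h8 : ((M:ℤ) * K) = n := by exact_mod_cast hKM
        rw [← h8]; ring
      have hsurj : Function.Surjective (torusProj (q := q)) := aux_torusProj_oqm.surjective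
      have hcontmaps : ∀ r, Continuous fun x : Torus q => uG r (surjInv hsurj x) := by
        intro r
        rw [← aux_torusProj_oqm.continuous_comp_iff]
        have heq : (fun x : Torus q => uG r (surjInv hsurj x)) ∘ torusProj = uG r :=
          funext fun t => hconst r _ t (surjInv_eq hsurj _)
        rw [heq]
        exact huGcont r
      set maps : Fin M → NValuedMap (Torus q) (Torus q) K := fun r =>
        ⟨fun x => uG r (surjInv hsurj x), hcontmaps r⟩ with hmaps
      have hmapsGen : ∀ r (t : Fin q → ℝ), maps r (torusProj t) = uG r t := by
        intro r t
        exact hconst r _ t (surjInv_eq hsurj (torusProj t))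
      have hvalues : ∀ x : Torus q,
          UnordConf.values (f x) = ⋃ i : Fin M, UnordConf.values (maps i x) := ?_
      · refine ⟨M, by omega, ⟨?_⟩⟩
        exact
          { card := fun _ => K
            card_pos := fun _ => hKpos
            maps := maps
            sum_card := by simpa [Finset.sum_const, Finset.card_univ, smul_eq_mul] using hKM
            values_eq := hvalues }
      intro x
      obtain ⟨t, rfl⟩ := hsurj x
      rw [hf t]
      ext y
      simp only [Set.mem_iUnion, Set.mem_range]
      constructor
      · rintro ⟨k, rfl⟩
        have hk := k.2
        refine ⟨⟨k.val % M, Nat.mod_lt _ (by omega)⟩, ?_⟩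
        rw [hmapsGen]
        have hKM2 : K * M = n := by rw [Nat.mul_comm]; exact hKM
        have hdivlt : k.val / M < K := by
          rw [Nat.div_lt_iff_lt_mul (by omega : 0 < M)]
          omega
        refine ⟨⟨k.val / M, hdivlt⟩, ?_⟩
        refine congrArg (fun z : ℤ => torusProj (linLift n A z t)) ?_
        simp only [hkidx]
        have h9' : ((k.val % M : ℕ) : ℤ) + ((k.val / M : ℕ) : ℤ) * ((M:ℕ):ℤ) = (k.val : ℤ) := by
          exact_mod_cast Nat.mod_add_div' k.val M
        omega
      · rintro ⟨r, hy⟩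
        rw [hmapsGen] at hy
        obtain ⟨a, rfl⟩ := hy
        have hlt : r.val + a.val * M < n := by
          have h1 := r.2; have h2 := a.2
          nlinarith
        refine ⟨⟨r.val + a.val * M, hlt⟩, ?_⟩
        refine congrArg (fun z : ℤ => torusProj (linLift n A z t)) ?_
        rw [hkidx]
        push_cast
        ring
end
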